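/- arXiv:2108.04011 — 4 statements merged into one kernel-verified Lean document; each statement's English description precedes it below -/
import Mathlib

section
/- The constant configuration 𝟏 is the unique global minimum of the Hamiltonian H: for every configuration σ ≠ 𝟏 one has H(σ) > H(𝟏); equivalently, the stable set X^s (the set of global minima of H) equals {𝟏}. -/
/-!
Metastability for the q-state Potts model with positive external magnetic field
on the K × L torus, under Glauber (single-spin-flip) dynamics.
-/

namespace PottsPos

/-- Vertices of the `K × L` torus (periodic boundary conditions). -/
abbrev Vtx (K L : ℕ) := ZMod K × ZMod L

/-- Spin configurations; spins are natural numbers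
(valid configurations take values in `{1,…,q}`). -/
abbrev Cfg (K L : ℕ) := Vtx K L → ℕ

/-- `σ` is a genuine `q`-state Potts configuration: all spins lie in `{1,…,q}`. -/
def IsConf (q K L : ℕ) (σ : Cfg K L) : Prop := ∀ v, 1 ≤ σ v ∧ σ v ≤ q

/-- The constant configuration with all spins equal to `s`. -/
def const (K L s : ℕ) : Cfg K L := fun _ => s

/-- Nearest-neighbour adjacency on the torus. -/
def Adj (K L : ℕ) (v w : Vtx K L) : Prop :=
  w = (v.1 + 1, v.2) ∨ w = (v.1 - 1, v.2) ∨ w = (v.1, v.2 + 1) ∨ w = (v.1, v.2 - 1)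

/-- The Hamiltonian
`H(σ) = −Σ_{(v,w)∈E} 1{σ(v)=σ(w)} − h·Σ_{v∈Λ} 1{σ(v)=1}`,
where each torus edge is counted once via its "forward" endpoints. -/
noncomputable def energy (K L : ℕ) [NeZero K] [NeZero L] (h : ℝ) (σ : Cfg K L) : ℝ :=
  -(∑ v : Vtx K L, ((if σ v = σ (v.1 + 1, v.2) then (1 : ℝ) else 0)
      + (if σ v = σ (v.1, v.2 + 1) then (1 : ℝ) else 0)))
    - h * ∑ v : Vtx K L, (if σ v = 1 then (1 : ℝ) else 0)

/-- Two configurations communicate iff they differ at exactly one vertex. -/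
def Communicates (K L : ℕ) (σ σ' : Cfg K L) : Prop :=
  ∃ v, σ v ≠ σ' v ∧ ∀ w, w ≠ v → σ w = σ' w

/-- `ω` is a path from `σ` to `σ'` in the space of valid configurations:
a nonempty finite sequence starting at `σ`, ending at `σ'`,
in which consecutive configurations communicate. -/
def IsPath (q K L : ℕ) (σ σ' : Cfg K L) (ω : List (Cfg K L)) : Prop :=
  ω.head? = some σ ∧ ω.getLast? = some σ' ∧ ω.Chain' (Communicates K L) ∧
    ∀ η ∈ ω, IsConf q K L η

/-- The height of a path: the maximal energy along it. -/
noncomputable def height (K L : ℕ) [NeZero K] [NeZero L] (h : ℝ)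
    (ω : List (Cfg K L)) : ℝ :=
  sSup (energy K L h '' {η | η ∈ ω})

/-- The communication height `Φ(σ,σ')`: minimal height over all paths `σ → σ'`. -/
noncomputable def Phi (q K L : ℕ) [NeZero K] [NeZero L] (h : ℝ) (σ σ' : Cfg K L) : ℝ :=
  sInf (height K L h '' {ω | IsPath q K L σ σ' ω})

/-- The communication height `Φ(σ,A) = min_{σ'∈A} Φ(σ,σ')`. -/
noncomputable def PhiSet (q K L : ℕ) [NeZero K] [NeZero L] (h : ℝ) (σ : Cfg K L)
    (A : Set (Cfg K L)) : ℝ :=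
  sInf (Phi q K L h σ '' A)

/-- Optimal paths from `σ` to `σ'`: paths whose height equals `Φ(σ,σ')`. -/
def IsOptPath (q K L : ℕ) [NeZero K] [NeZero L] (h : ℝ) (σ σ' : Cfg K L)
    (ω : List (Cfg K L)) : Prop :=
  IsPath q K L σ σ' ω ∧ height K L h ω = Phi q K L h σ σ'

/-- Optimal paths from `σ` to the set `A`: paths from `σ` to some element of `A`
whose height equals `Φ(σ,A)`. -/
def IsOptPathSet (q K L : ℕ) [NeZero K] [NeZero L] (h : ℝ) (σ : Cfg K L)
    (A : Set (Cfg K L)) (ω : List (Cfg K L)) : Prop :=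
  ∃ σ' ∈ A, IsPath q K L σ σ' ω ∧ height K L h ω = PhiSet q K L h σ A

/-- The stability level `V_σ = Φ(σ, I_σ) − H(σ)`, `I_σ = {η : H(η) < H(σ)}`. -/
noncomputable def stabLevel (q K L : ℕ) [NeZero K] [NeZero L] (h : ℝ)
    (σ : Cfg K L) : ℝ :=
  PhiSet q K L h σ {η | IsConf q K L η ∧ energy K L h η < energy K L h σ}
    - energy K L h σ

/-- The stable set `X^s`: global minima of the Hamiltonian. -/
def stableSet (q K L : ℕ) [NeZero K] [NeZero L] (h : ℝ) : Set (Cfg K L) :=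
  {σ | IsConf q K L σ ∧ ∀ η, IsConf q K L η → energy K L h σ ≤ energy K L h η}

/-- The metastable set `X^m`: non-stable states of maximal stability level. -/
noncomputable def metastableSet (q K L : ℕ) [NeZero K] [NeZero L] (h : ℝ) :
    Set (Cfg K L) :=
  {σ | IsConf q K L σ ∧ σ ∉ stableSet q K L h ∧
    stabLevel q K L h σ =
      sSup {t | ∃ η, IsConf q K L η ∧ η ∉ stableSet q K L h ∧ stabLevel q K L h η = t}}

/-- The critical length `ℓ* = ⌈2/h⌉`. -/
noncomputable def ellStar (h : ℝ) : ℕ := ⌈(2 : ℝ) / h⌉₊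

/-- The energy barrier `Γ = 4ℓ* − h(ℓ*(ℓ*−1)+1)`. -/
noncomputable def Gamma (h : ℝ) : ℝ :=
  4 * (ellStar h : ℝ) - h * ((ellStar h : ℝ) * ((ellStar h : ℝ) - 1) + 1)

/-- `W` is a gate for the transition `σ → A`: every configuration of `W` lies on some
optimal path from `σ` to `A` at energy `Φ(σ,A)`, and every optimal path from `σ`
to `A` visits `W`. -/
def IsGate (q K L : ℕ) [NeZero K] [NeZero L] (h : ℝ) (σ : Cfg K L)
    (A W : Set (Cfg K L)) : Prop :=
  (∀ η ∈ W, ∃ ω, IsOptPathSet q K L h σ A ω ∧ η ∈ ω ∧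
      energy K L h η = PhiSet q K L h σ A) ∧
  ∀ ω, IsOptPathSet q K L h σ A ω → ∃ η ∈ W, η ∈ ω

/-- A minimal gate: a gate no proper subset of which is a gate. -/
def IsMinimalGate (q K L : ℕ) [NeZero K] [NeZero L] (h : ℝ) (σ : Cfg K L)
    (A W : Set (Cfg K L)) : Prop :=
  IsGate q K L h σ A W ∧ ∀ W', W' ⊂ W → ¬ IsGate q K L h σ A W'

/-- A `p × r` rectangle (p rows, r columns) on the torus with base point `(x,y)`. -/
def rect (K L : ℕ) (x : ZMod K) (y : ZMod L) (p r : ℕ) : Set (Vtx K L) :=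
  {v | ∃ i j : ℕ, i < p ∧ j < r ∧ v = (x + (i : ZMod K), y + (j : ZMod L))}

/-- `A` is an `a × b` rectangle on the torus (in either orientation). -/
def IsRect (K L : ℕ) (A : Set (Vtx K L)) (a b : ℕ) : Prop :=
  ∃ x y, A = rect K L x y a b ∨ A = rect K L x y b a

/-- `R̄_{a,b}(r,s)`: configurations equal to `r` everywhere except on an
`a × b` rectangle where they equal `s`. -/
def Rbar (K L a b r s : ℕ) : Set (Cfg K L) :=
  {σ | ∃ A, IsRect K L A a b ∧ (∀ v ∈ A, σ v = s) ∧ ∀ v ∉ A, σ v = r}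

/-- A horizontal bar of `l` cells in row `x`, starting at column `y`. -/
def hbar (K L : ℕ) (x : ZMod K) (y : ZMod L) (l : ℕ) : Set (Vtx K L) :=
  {v | ∃ j : ℕ, j < l ∧ v = (x, y + (j : ZMod L))}

/-- A vertical bar of `l` cells in column `y`, starting at row `x`. -/
def vbar (K L : ℕ) (x : ZMod K) (y : ZMod L) (l : ℕ) : Set (Vtx K L) :=
  {v | ∃ j : ℕ, j < l ∧ v = (x + (j : ZMod K), y)}

/-- `A` is an `a × b` rectangle together with a `1 × l` bar adjacent to one of the
sides of length `b` (in either orientation of the rectangle). -/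
def IsRectWithBar (K L : ℕ) (A : Set (Vtx K L)) (a b l : ℕ) : Prop :=
  ∃ (x : ZMod K) (y : ZMod L) (j0 : ℕ), j0 + l ≤ b ∧
    (A = rect K L x y a b ∪ hbar K L (x + (a : ZMod K)) (y + (j0 : ZMod L)) l ∨
     A = rect K L x y a b ∪ hbar K L (x - 1) (y + (j0 : ZMod L)) l ∨
     A = rect K L x y b a ∪ vbar K L (x + (j0 : ZMod K)) (y + (a : ZMod L)) l ∨
     A = rect K L x y b a ∪ vbar K L (x + (j0 : ZMod K)) (y - 1) l)

/-- `B̄^l_{a,b}(r,s)`: configurations equal to `r` everywhere except on an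
`a × b` rectangle with a `1 × l` bar attached to a side of length `b`,
where they equal `s`. -/
def Bbar (K L a b l r s : ℕ) : Set (Cfg K L) :=
  {σ | ∃ A, IsRectWithBar K L A a b l ∧ (∀ v ∈ A, σ v = s) ∧ ∀ v ∉ A, σ v = r}

/-- Connectedness of a set of vertices under torus adjacency. -/
def ConnSet (K L : ℕ) (C : Set (Vtx K L)) : Prop :=
  ∀ u ∈ C, ∀ w ∈ C, ∃ γ : List (Vtx K L), γ.head? = some u ∧ γ.getLast? = some w ∧
    γ.Chain' (Adj K L) ∧ ∀ v ∈ γ, v ∈ C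

/-- The perimeter of a set of vertices: the number of torus edges joining it
to its complement. -/
noncomputable def perimeter (K L : ℕ) (C : Set (Vtx K L)) : ℕ :=
  Set.ncard {p : Vtx K L × Vtx K L | Adj K L p.1 p.2 ∧ p.1 ∈ C ∧ p.2 ∉ C}

/-- The external boundary `∂C` of a set of configurations. -/
def extBoundary (q K L : ℕ) (C : Set (Cfg K L)) : Set (Cfg K L) :=
  {η | IsConf q K L η ∧ η ∉ C ∧ ∃ σ ∈ C, Communicates K L σ η}

/-- Connectedness of a set of configurations under single-spin updates. -/
def ConnCfg (q K L : ℕ) (C : Set (Cfg K L)) : Prop :=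
  ∀ σ ∈ C, ∀ η ∈ C, ∃ ω, IsPath q K L σ η ω ∧ ∀ ξ ∈ ω, ξ ∈ C

/-- A cycle: a nonempty set of configurations which is either a singleton, or is
connected with `max H` inside strictly below `min H` on the external boundary. -/
def IsCycle (q K L : ℕ) [NeZero K] [NeZero L] (h : ℝ) (C : Set (Cfg K L)) : Prop :=
  C.Nonempty ∧ (∀ σ ∈ C, IsConf q K L σ) ∧
    ((∃ σ, C = {σ}) ∨
      (ConnCfg q K L C ∧
        sSup (energy K L h '' C) < sInf (energy K L h '' extBoundary q K L C)))

open Classical in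
/-- The depth of a cycle: `0` for singletons, otherwise
`min H on ∂C − min H on C`. -/
noncomputable def depth (q K L : ℕ) [NeZero K] [NeZero L] (h : ℝ)
    (C : Set (Cfg K L)) : ℝ :=
  if ∃ σ, C = {σ} then 0
  else sInf (energy K L h '' extBoundary q K L C) - sInf (energy K L h '' C)

/-- `D^m`: configurations with exactly `KL − (ℓ*(ℓ*−1)+1)` spins equal to `m`. -/
def Dm (q K L : ℕ) (h : ℝ) (m : ℕ) : Set (Cfg K L) :=
  {σ | IsConf q K L σ ∧
    Set.ncard {v | σ v = m} = K * L - (ellStar h * (ellStar h - 1) + 1)}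

/-- `F(D^m)`: the minimizers of the energy on `D^m`. -/
def FDm (q K L : ℕ) [NeZero K] [NeZero L] (h : ℝ) (m : ℕ) : Set (Cfg K L) :=
  {σ | σ ∈ Dm q K L h m ∧ ∀ η ∈ Dm q K L h m, energy K L h σ ≤ energy K L h η}

/-- `n_s(v)`: the number of nearest neighbours of `v` whose spin in `σ` is `s`. -/
noncomputable def nnbr (K L : ℕ) (σ : Cfg K L) (v : Vtx K L) (s : ℕ) : ℕ :=
  Set.ncard {w | Adj K L v w ∧ σ w = s}


/-- the constant configuration `𝟏` is the unique global minimum of `H`;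
equivalently, the stable set equals `{𝟏}`. -/
theorem stable_state_unique (q K L : ℕ) [NeZero K] [NeZero L] (h : ℝ)
    (hq : 2 < q) (hh0 : 0 < h) (hh1 : h < 1)
    (hhint : ¬ ∃ n : ℤ, (2 : ℝ) / h = (n : ℝ))
    (hK : 3 * ellStar h ≤ K) (hKL : K ≤ L) :
    (∀ σ : Cfg K L, IsConf q K L σ → σ ≠ const K L 1 →
      energy K L h (const K L 1) < energy K L h σ) ∧
    stableSet q K L h = {const K L 1} := by
  have hconst : IsConf q K L (const K L 1) := fun v => ⟨le_refl 1, by show 1 ≤ q; omega⟩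
  set N : ℝ := (Fintype.card (Vtx K L) : ℝ) with hN
  have hE1 : energy K L h (const K L 1) = -(2 * N) - h * N := by
    simp [energy, const, Finset.sum_const, hN]
    ring
  have key : ∀ σ : Cfg K L, σ ≠ const K L 1 →
      energy K L h (const K L 1) + h ≤ energy K L h σ := by
    intro σ hne
    obtain ⟨v0, hv0⟩ : ∃ v, σ v ≠ 1 := by
      by_contra hc; push_neg at hc; exact hne (funext hc)
    have h1 : ∑ v : Vtx K L, ((if σ v = σ (v.1 + 1, v.2) then (1 : ℝ) else 0)
        + (if σ v = σ (v.1, v.2 + 1) then (1 : ℝ) else 0)) ≤ 2 * N := by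
      calc ∑ v : Vtx K L, ((if σ v = σ (v.1 + 1, v.2) then (1 : ℝ) else 0)
            + (if σ v = σ (v.1, v.2 + 1) then (1 : ℝ) else 0))
          ≤ ∑ _v : Vtx K L, (2 : ℝ) := by
            apply Finset.sum_le_sum; intro v _; split <;> split <;> norm_num
        _ = 2 * N := by simp [hN]; ring
    have h2 : ∑ v : Vtx K L, (if σ v = 1 then (1 : ℝ) else 0) ≤ N - 1 := by
      have : ∑ v : Vtx K L, (if σ v = 1 then (1 : ℝ) else 0)
          ≤ ∑ v : Vtx K L, ((1 : ℝ) - if v = v0 then 1 else 0) := by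
        apply Finset.sum_le_sum; intro v _
        by_cases hv : v = v0
        · subst hv; simp [hv0]
        · simp [hv]; split <;> norm_num
      calc ∑ v : Vtx K L, (if σ v = 1 then (1 : ℝ) else 0)
          ≤ ∑ v : Vtx K L, ((1 : ℝ) - if v = v0 then 1 else 0) := this
        _ = N - 1 := by
            rw [Finset.sum_sub_distrib, Finset.sum_ite_eq' Finset.univ v0 (fun _ => (1:ℝ))]
            simp [hN]
    have hmul : h * ∑ v : Vtx K L, (if σ v = 1 then (1 : ℝ) else 0) ≤ h * (N - 1) :=
      mul_le_mul_of_nonneg_left h2 (le_of_lt hh0)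
    rw [hE1]
    unfold energy
    linarith
  have first : ∀ σ : Cfg K L, IsConf q K L σ → σ ≠ const K L 1 →
      energy K L h (const K L 1) < energy K L h σ := by
    intro σ _ hne
    have := key σ hne
    linarith
  refine ⟨first, ?_⟩
  ext σ
  constructor
  · rintro ⟨hc, hmin⟩
    by_contra hne
    have hne' : σ ≠ const K L 1 := fun he => hne (by simp [he])
    have h1 := first σ hc hne'
    have h2 := hmin (const K L 1) hconst
    linarith
  · rintro rfl
    refine ⟨hconst, fun η hη => ?_⟩
    by_cases hne : η = const K L 1
    · rw [hne]
    · exact le_of_lt (first η hη hne)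

end PottsPos
end

section
/- Upper bound for the communication height: for every m ∈ {2,…,q}, Φ(𝐦, 𝟏) − H(𝐦) ≤ 4ℓ* − h(ℓ*(ℓ*−1)+1). -/
/-!
Metastability for the q-state Potts model with positive external magnetic field
on the K × L torus, under Glauber (single-spin-flip) dynamics.
-/

namespace PottsPos

/-! ### Auxiliary machinery for the upper bound -/

section Aux

open Finset

/-- Reindex a sum over `ZMod n` as a sum over `Finset.range n`. -/
lemma sum_zmod {M : Type*} [AddCommMonoid M] (n : ℕ) [NeZero n] (f : ZMod n → M) :
    ∑ y : ZMod n, f y = ∑ j ∈ Finset.range n, f (j : ZMod n) := by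
  exact Finset.sum_nbij' (fun y => y.val) (fun j => (j : ZMod n))
    (fun a _ => Finset.mem_range.mpr (ZMod.val_lt a))
    (fun a _ => Finset.mem_univ _)
    (fun a _ => ZMod.natCast_rightInverse a)
    (fun j hj => by simp [ZMod.val_natCast, Nat.mod_eq_of_lt (Finset.mem_range.mp hj)])
    (fun a _ => by rw [ZMod.natCast_rightInverse a])

lemma val_natCast_of_lt {n : ℕ} [NeZero n] {j : ℕ} (hj : j < n) :
    ((j : ZMod n)).val = j := by
  rw [ZMod.val_natCast, Nat.mod_eq_of_lt hj]

/-- Counting the first `c` elements of `ZMod K`. -/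
lemma count_lt (K : ℕ) [NeZero K] (c : ℕ) (hc : c ≤ K) :
    ∑ x : ZMod K, (if x.val < c then (1:ℝ) else 0) = c := by
  rw [sum_zmod K (fun x => if x.val < c then (1:ℝ) else 0)]
  have : ∀ j ∈ Finset.range K, (if ((j : ZMod K)).val < c then (1:ℝ) else 0)
      = (if j < c then (1:ℝ) else 0) := by
    intro j hj; rw [val_natCast_of_lt (Finset.mem_range.mp hj)]
  rw [Finset.sum_congr rfl this, Finset.sum_boole]
  have : (Finset.range K).filter (fun j => j < c) = Finset.range c := by
    ext j; simp only [Finset.mem_filter, Finset.mem_range]; omega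
  rw [this, Finset.card_range]

/-- Horizontal mismatch count. -/
lemma pair_count (K : ℕ) [NeZero K] (a b : ℕ) (ha : a ≤ K) (hb : b ≤ K) :
    ∑ x : ZMod K, (if (x.val < a) ↔ (x.val < b) then (1:ℝ) else 0)
      = K - (Nat.dist a b : ℝ) := by
  rw [sum_zmod K (fun x => if (x.val < a) ↔ (x.val < b) then (1:ℝ) else 0)]
  have h1 : ∀ j ∈ Finset.range K, (if ((j : ZMod K)).val < a ↔ ((j : ZMod K)).val < b then (1:ℝ) else 0)
      = 1 - (if (min a b ≤ j ∧ j < max a b) then (1:ℝ) else 0) := by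
    intro j hj; rw [val_natCast_of_lt (Finset.mem_range.mp hj)]
    rcases Nat.lt_or_ge j (min a b) with hlt | hge
    · rw [if_pos (by omega), if_neg (by omega)]; norm_num
    · rcases Nat.lt_or_ge j (max a b) with h2 | h2
      · rw [if_neg (by omega), if_pos (by omega)]; norm_num
      · rw [if_pos (by omega), if_neg (by omega)]; norm_num
  rw [Finset.sum_congr rfl h1, Finset.sum_sub_distrib, Finset.sum_const, Finset.card_range,
    Finset.sum_boole]
  have : (Finset.range K).filter (fun j => min a b ≤ j ∧ j < max a b)
      = Finset.Ico (min a b) (max a b) := by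
    ext j; simp only [Finset.mem_filter, Finset.mem_range, Finset.mem_Ico]; omega
  rw [this, Nat.card_Ico]
  have : Nat.dist a b = max a b - min a b := by
    rcases Nat.le_total a b with hab | hab
    · rw [Nat.dist_eq_sub_of_le hab]; omega
    · rw [Nat.dist_eq_sub_of_le_right hab]; omega
  rw [this]; push_cast; ring

/-- Vertical mismatch count in one column. -/
lemma succ_count (K : ℕ) [NeZero K] (c : ℕ) (hc : c ≤ K) :
    ∑ x : ZMod K, (if (x.val < c) ↔ (((x+1 : ZMod K)).val < c) then (1:ℝ) else 0)
      = K - (if 0 < c ∧ c < K then (2:ℝ) else 0) := by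
  have hK : 0 < K := Nat.pos_of_ne_zero (NeZero.ne K)
  rw [sum_zmod K (fun x => if (x.val < c) ↔ (((x+1 : ZMod K)).val < c) then (1:ℝ) else 0)]
  have h1 : ∀ j ∈ Finset.range K,
      (if (((j : ZMod K)).val < c) ↔ ((((j : ZMod K)+1 : ZMod K)).val < c) then (1:ℝ) else 0)
      = 1 - (if ¬((j < c) ↔ ((j+1) % K < c)) then (1:ℝ) else 0) := by
    intro j hj
    have hjK := Finset.mem_range.mp hj
    have e1 : ((j : ZMod K)).val = j := val_natCast_of_lt hjK
    have e2 : (((j : ZMod K)+1 : ZMod K)).val = (j+1) % K := by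
      have : ((j : ZMod K)+1 : ZMod K) = ((j+1 : ℕ) : ZMod K) := by push_cast [Nat.cast_add]; ring
      rw [this, ZMod.val_natCast]
    rw [e1, e2]
    by_cases hcase : (j < c) ↔ ((j+1) % K < c)
    · rw [if_pos hcase, if_neg (not_not_intro hcase)]; norm_num
    · rw [if_neg hcase, if_pos hcase]; norm_num
  rw [Finset.sum_congr rfl h1, Finset.sum_sub_distrib, Finset.sum_const, Finset.card_range,
    Finset.sum_boole]
  have h2 : (Finset.range K).filter (fun j => ¬((j < c) ↔ ((j+1) % K < c)))
      = if 0 < c ∧ c < K then {c-1, K-1} else ∅ := by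
    split_ifs with hmid
    · ext j
      simp only [Finset.mem_filter, Finset.mem_range, Finset.mem_insert, Finset.mem_singleton]
      constructor
      · rintro ⟨hjK, hne⟩
        rcases Nat.lt_or_ge (j+1) K with hlt | hge
        · rw [Nat.mod_eq_of_lt hlt] at hne; left; omega
        · right; omega
      · rintro (rfl | rfl)
        · have hjK : c - 1 < K := by omega
          constructor
          · omega
          · have : c - 1 + 1 = c := by omega
            rw [this]
            rcases Nat.lt_or_ge c K with hlt | hge
            · rw [Nat.mod_eq_of_lt hlt]; omega
            · omega
        · constructor
          · omega
          · have : K - 1 + 1 = K := by omega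
            rw [this, Nat.mod_self]; omega
    · ext j
      simp only [Finset.mem_filter, Finset.mem_range, Finset.notMem_empty, iff_false]
      rintro ⟨hjK, hne⟩
      rcases Nat.lt_or_ge (j+1) K with hlt | hge
      · rw [Nat.mod_eq_of_lt hlt] at hne; omega
      · have : j + 1 = K := by omega
        rw [this, Nat.mod_self] at hne; omega
  rw [h2]
  split_ifs with hmid
  · have : ({c-1, K-1} : Finset ℕ).card = 2 := by
      rw [Finset.card_insert_of_notMem (by simp; omega), Finset.card_singleton]
    rw [this]; norm_num
  · simp

end Aux


section Energy

open Finset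

/-- Two-valued configuration given by a column-height profile `g`. -/
def pcfg (K L m : ℕ) (g : ℕ → ℕ) : Cfg K L :=
  fun v => if v.1.val < g v.2.val then 1 else m

lemma ind_eq (m : ℕ) (hm : 2 ≤ m) (P Q : Prop) [Decidable P] [Decidable Q] :
    (if (if P then (1:ℕ) else m) = (if Q then (1:ℕ) else m) then (1:ℝ) else 0)
      = (if P ↔ Q then (1:ℝ) else 0) := by
  by_cases hP : P <;> by_cases hQ : Q <;> simp [hP, hQ] <;> omega

lemma ind_one (m : ℕ) (hm : 2 ≤ m) (P : Prop) [Decidable P] :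
    (if (if P then (1:ℕ) else m) = 1 then (1:ℝ) else 0) = (if P then (1:ℝ) else 0) := by
  by_cases hP : P <;> simp [hP] <;> omega

/-- The energy of a profile configuration. -/
lemma energy_pcfg (K L : ℕ) [NeZero K] [NeZero L] (h : ℝ) (m : ℕ) (hm : 2 ≤ m)
    (g : ℕ → ℕ) (hgK : ∀ j, g j ≤ K) :
    energy K L h (pcfg K L m g) = -(2*(K:ℝ)*L)
      + (∑ j ∈ Finset.range L, (if 0 < g j ∧ g j < K then (2:ℝ) else 0))
      + (∑ j ∈ Finset.range L, (Nat.dist (g j) (g ((j+1)%L)) : ℝ))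
      - h * ∑ j ∈ Finset.range L, (g j : ℝ) := by
  have hsplit : ∀ f : Vtx K L → ℝ, ∑ x : Vtx K L, f x = ∑ y : ZMod L, ∑ x : ZMod K, f (x, y) :=
    fun f => Fintype.sum_prod_type_right f
  unfold energy
  rw [Finset.sum_add_distrib]
  have e1 : ∑ v : Vtx K L, (if pcfg K L m g v = pcfg K L m g (v.1 + 1, v.2) then (1:ℝ) else 0)
      = (K:ℝ)*L - ∑ j ∈ Finset.range L, (if 0 < g j ∧ g j < K then (2:ℝ) else 0) := by
    rw [hsplit]
    have inner : ∀ y : ZMod L, ∑ x : ZMod K,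
        (if pcfg K L m g (x, y) = pcfg K L m g ((x, y).1 + 1, (x, y).2) then (1:ℝ) else 0)
        = (K:ℝ) - (if 0 < g y.val ∧ g y.val < K then (2:ℝ) else 0) := by
      intro y
      have : ∀ x : ZMod K,
          (if pcfg K L m g (x, y) = pcfg K L m g ((x, y).1 + 1, (x, y).2) then (1:ℝ) else 0)
          = (if (x.val < g y.val) ↔ (((x+1 : ZMod K)).val < g y.val) then (1:ℝ) else 0) := by
        intro x; exact ind_eq m hm _ _
      rw [Finset.sum_congr rfl (fun x _ => this x)]
      exact succ_count K (g y.val) (hgK _)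
    rw [Finset.sum_congr rfl (fun y _ => inner y), Finset.sum_sub_distrib, Finset.sum_const,
      Finset.card_univ, ZMod.card, sum_zmod L (fun y => if 0 < g y.val ∧ g y.val < K then (2:ℝ) else 0)]
    have : ∀ j ∈ Finset.range L, (if 0 < g ((j : ZMod L)).val ∧ g ((j : ZMod L)).val < K then (2:ℝ) else 0)
        = (if 0 < g j ∧ g j < K then (2:ℝ) else 0) := by
      intro j hj; rw [val_natCast_of_lt (Finset.mem_range.mp hj)]
    rw [Finset.sum_congr rfl this]
    push_cast; ring
  have e2 : ∑ v : Vtx K L, (if pcfg K L m g v = pcfg K L m g (v.1, v.2 + 1) then (1:ℝ) else 0)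
      = (K:ℝ)*L - ∑ j ∈ Finset.range L, (Nat.dist (g j) (g ((j+1)%L)) : ℝ) := by
    rw [hsplit]
    have inner : ∀ y : ZMod L, ∑ x : ZMod K,
        (if pcfg K L m g (x, y) = pcfg K L m g ((x, y).1, (x, y).2 + 1) then (1:ℝ) else 0)
        = (K:ℝ) - (Nat.dist (g y.val) (g ((y+1 : ZMod L)).val) : ℝ) := by
      intro y
      have : ∀ x : ZMod K,
          (if pcfg K L m g (x, y) = pcfg K L m g ((x, y).1, (x, y).2 + 1) then (1:ℝ) else 0)
          = (if (x.val < g y.val) ↔ (x.val < g ((y+1 : ZMod L)).val) then (1:ℝ) else 0) := by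
        intro x; exact ind_eq m hm _ _
      rw [Finset.sum_congr rfl (fun x _ => this x)]
      exact pair_count K _ _ (hgK _) (hgK _)
    rw [Finset.sum_congr rfl (fun y _ => inner y), Finset.sum_sub_distrib, Finset.sum_const,
      Finset.card_univ, ZMod.card,
      sum_zmod L (fun y => (Nat.dist (g y.val) (g ((y+1 : ZMod L)).val) : ℝ))]
    have : ∀ j ∈ Finset.range L, (Nat.dist (g ((j : ZMod L)).val) (g (((j : ZMod L)+1 : ZMod L)).val) : ℝ)
        = (Nat.dist (g j) (g ((j+1)%L)) : ℝ) := by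
      intro j hj
      have e2a : (((j : ZMod L)+1 : ZMod L)) = ((j+1 : ℕ) : ZMod L) := by push_cast [Nat.cast_add]; ring
      rw [val_natCast_of_lt (Finset.mem_range.mp hj), e2a, ZMod.val_natCast]
    rw [Finset.sum_congr rfl this]
    push_cast; ring
  have e3 : ∑ v : Vtx K L, (if pcfg K L m g v = 1 then (1:ℝ) else 0)
      = ∑ j ∈ Finset.range L, (g j : ℝ) := by
    rw [hsplit]
    have inner : ∀ y : ZMod L, ∑ x : ZMod K,
        (if pcfg K L m g (x, y) = 1 then (1:ℝ) else 0) = (g y.val : ℝ) := by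
      intro y
      have : ∀ x : ZMod K, (if pcfg K L m g (x, y) = 1 then (1:ℝ) else 0)
          = (if x.val < g y.val then (1:ℝ) else 0) := by
        intro x; exact ind_one m hm _
      rw [Finset.sum_congr rfl (fun x _ => this x)]
      exact count_lt K _ (hgK _)
    rw [Finset.sum_congr rfl (fun y _ => inner y), sum_zmod L (fun y => (g y.val : ℝ))]
    refine Finset.sum_congr rfl ?_
    intro j hj; rw [val_natCast_of_lt (Finset.mem_range.mp hj)]
  rw [e1, e2, e3]; ring

/-- Staircase profile: `u` on `[0,p)`, `v` on `[p,r)`, `0` on `[r,∞)`. -/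
def stair (p u r v : ℕ) : ℕ → ℕ := fun j => if j < p then u else if j < r then v else 0

lemma stair_sum (L : ℕ) (f : ℕ → ℝ) (hf0 : f 0 = 0) (p u r v : ℕ)
    (hpr : p ≤ r) (hrL : r ≤ L) :
    ∑ j ∈ Finset.range L, f (stair p u r v j) = p * f u + (r - p : ℕ) * f v := by
  rw [Finset.range_eq_Ico, ← Finset.sum_Ico_consecutive _ (Nat.zero_le r) hrL,
    ← Finset.sum_Ico_consecutive _ (Nat.zero_le p) hpr]
  have h1 : ∑ j ∈ Finset.Ico 0 p, f (stair p u r v j) = p * f u := by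
    rw [Finset.sum_congr rfl (fun j hj => by
      rw [show stair p u r v j = u from by
        unfold stair; rw [if_pos (Finset.mem_Ico.mp hj).2]])]
    rw [Finset.sum_const, Nat.card_Ico, nsmul_eq_mul]; norm_num
  have h2 : ∑ j ∈ Finset.Ico p r, f (stair p u r v j) = (r - p : ℕ) * f v := by
    rw [Finset.sum_congr rfl (fun j hj => by
      rw [show stair p u r v j = v from by
        unfold stair
        have h2a := (Finset.mem_Ico.mp hj).1
        rw [if_neg (by omega : ¬ j < p), if_pos (Finset.mem_Ico.mp hj).2]
        ])]
    rw [Finset.sum_const, Nat.card_Ico, nsmul_eq_mul]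
  have h3 : ∑ j ∈ Finset.Ico r L, f (stair p u r v j) = 0 := by
    rw [Finset.sum_congr rfl (fun j hj => by
      rw [show stair p u r v j = 0 from by
        unfold stair
        have := (Finset.mem_Ico.mp hj).1
        rw [if_neg (by omega : ¬ j < p), if_neg (by omega : ¬ j < r)]])]
    simp [hf0]
  rw [h1, h2, h3]; ring
  
lemma sum_dist_antitone (L : ℕ) (hL : 0 < L) (g : ℕ → ℕ) (hg : ∀ i j, i ≤ j → g j ≤ g i) :
    ∑ j ∈ Finset.range L, Nat.dist (g j) (g ((j+1)%L)) ≤ 2 * g 0 := by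
  obtain ⟨L', rfl⟩ : ∃ L', L = L' + 1 := ⟨L - 1, by omega⟩
  have tele : ∀ n : ℕ, ∑ j ∈ Finset.range n, (g j - g (j+1)) = g 0 - g n := by
    intro n; induction n with
    | zero => simp
    | succ n ih =>
      rw [Finset.sum_range_succ, ih]
      have h1 := hg n (n+1) (by omega)
      have h2 := hg 0 n (by omega)
      omega
  have hcongr : ∀ j ∈ Finset.range L', Nat.dist (g j) (g ((j+1)%(L'+1))) = g j - g (j+1) := by
    intro j hj
    have hjL := Finset.mem_range.mp hj
    rw [Nat.mod_eq_of_lt (by omega)]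
    exact Nat.dist_eq_sub_of_le_right (hg j (j+1) (by omega))
  rw [Finset.sum_range_succ, Finset.sum_congr rfl hcongr, tele L']
  have : (L' + 1) % (L' + 1) = 0 := Nat.mod_self _
  rw [this, Nat.dist_eq_sub_of_le (hg 0 L' (by omega))]
  have := hg 0 L' (by omega)
  omega

/-- Master energy bound for staircase configurations. -/
lemma energy_stair_le (K L : ℕ) [NeZero K] [NeZero L] (h : ℝ) (m : ℕ) (hm : 2 ≤ m)
    (p u r v : ℕ) (hpr : p ≤ r) (hrL : r ≤ L) (hvu : v ≤ u) (huK : u ≤ K) :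
    energy K L h (pcfg K L m (stair p u r v)) ≤ -(2*(K:ℝ)*L)
      + 2*(if 0 < u ∧ u < K then (p:ℝ) else 0) + 2*(if 0 < v ∧ v < K then ((r:ℝ) - p) else 0)
      + 2*u - h * ((p:ℝ)*u + ((r:ℝ)-p)*v) := by
  have hL : 0 < L := Nat.pos_of_ne_zero (NeZero.ne L)
  have hgK : ∀ j, stair p u r v j ≤ K := by
    intro j; unfold stair; split_ifs <;> omega
  rw [energy_pcfg K L h m hm _ hgK]
  have hV : ∑ j ∈ Finset.range L, (if 0 < stair p u r v j ∧ stair p u r v j < K then (2:ℝ) else 0)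
      = (p:ℝ) * (if 0 < u ∧ u < K then (2:ℝ) else 0) + ((r-p : ℕ):ℝ) * (if 0 < v ∧ v < K then (2:ℝ) else 0) := by
    exact stair_sum L (fun c => if 0 < c ∧ c < K then (2:ℝ) else 0) (by norm_num) p u r v hpr hrL
  have hM : ∑ j ∈ Finset.range L, ((stair p u r v j : ℕ) : ℝ)
      = (p:ℝ) * u + ((r-p : ℕ):ℝ) * v :=
    stair_sum L (fun c => (c:ℝ)) (by norm_num) p u r v hpr hrL
  have hanti : ∀ i j : ℕ, i ≤ j → stair p u r v j ≤ stair p u r v i := by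
    intro i j hij; unfold stair; split_ifs <;> omega
  have hD : ∑ j ∈ Finset.range L, (Nat.dist (stair p u r v j) (stair p u r v ((j+1)%L)) : ℝ)
      ≤ 2 * (u:ℝ) := by
    have hN := sum_dist_antitone L hL (stair p u r v) hanti
    have h0u : stair p u r v 0 ≤ u := by unfold stair; split_ifs <;> omega
    have : ∑ j ∈ Finset.range L, (Nat.dist (stair p u r v j) (stair p u r v ((j+1)%L)) : ℝ)
        = ((∑ j ∈ Finset.range L, Nat.dist (stair p u r v j) (stair p u r v ((j+1)%L)) : ℕ) : ℝ) := by
      push_cast; rfl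
    rw [this]
    have : (∑ j ∈ Finset.range L, Nat.dist (stair p u r v j) (stair p u r v ((j+1)%L)) : ℕ) ≤ 2 * u := by
      omega
    calc ((∑ j ∈ Finset.range L, Nat.dist (stair p u r v j) (stair p u r v ((j+1)%L)) : ℕ) : ℝ)
        ≤ ((2 * u : ℕ) : ℝ) := by exact_mod_cast this
      _ = 2 * (u:ℝ) := by push_cast; ring
  rw [hV, hM]
  have hrp : ((r - p : ℕ) : ℝ) = (r:ℝ) - p := by
    have := hpr; push_cast [Nat.cast_sub hpr]; ring
  rw [hrp]
  have hVle : (p:ℝ) * (if 0 < u ∧ u < K then (2:ℝ) else 0)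
      = 2*(if 0 < u ∧ u < K then (p:ℝ) else 0) := by split_ifs <;> ring
  have hVle2 : ((r:ℝ) - p) * (if 0 < v ∧ v < K then (2:ℝ) else 0)
      = 2*(if 0 < v ∧ v < K then ((r:ℝ) - p) else 0) := by split_ifs <;> ring
  rw [hVle, hVle2]
  linarith [hD]

end Energy


section Path

lemma stair_v0 (p u r : ℕ) : stair p u r 0 = stair p u p 0 := by
  funext j; unfold stair; split_ifs <;> omega

lemma sqrt_pin {a t : ℕ} (h1 : a*a ≤ t) (h2 : t < (a+1)*(a+1)) : Nat.sqrt t = a := by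
  have ha : a ≤ Nat.sqrt t := Nat.le_sqrt.mpr h1
  have hb : Nat.sqrt t < a + 1 := Nat.sqrt_lt.mpr h2
  omega

/-- The growth profile at time `t`: quasi-squares for `t ≤ K²`, then vertical strips. -/
def Fprof (K t : ℕ) : ℕ → ℕ :=
  if t ≤ K*K then
    (if t - Nat.sqrt t * Nat.sqrt t ≤ Nat.sqrt t then
      stair (Nat.sqrt t) (Nat.sqrt t) (Nat.sqrt t + 1) (t - Nat.sqrt t * Nat.sqrt t)
    else
      stair (t - Nat.sqrt t * Nat.sqrt t - Nat.sqrt t) (Nat.sqrt t + 1) (Nat.sqrt t + 1)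
        (Nat.sqrt t))
  else
    stair (K + (t - K*K)/K) K (K + (t - K*K)/K + 1) ((t - K*K) % K)

/-- One step of the growth: exactly one column grows by one cell. -/
lemma Fprof_succ (K L t : ℕ) (hK2 : 2 ≤ K) (hKL : K ≤ L) (ht : t < K*L) :
    ∃ j0 < L, Fprof K t j0 < K ∧ (Fprof K (t+1) j0 = Fprof K t j0 + 1) ∧
      ∀ j, j ≠ j0 → Fprof K (t+1) j = Fprof K t j := by
  have hKK : K*K ≤ K*L := Nat.mul_le_mul_left K hKL
  rcases lt_trichotomy t (K*K) with hA | hEq | hB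
  · -- quasi-square phase
    obtain ⟨a, ha⟩ : ∃ a, Nat.sqrt t = a := ⟨_, rfl⟩
    have haa : a*a ≤ t := ha ▸ Nat.sqrt_le t
    have hlt : t < (a+1)*(a+1) := ha ▸ Nat.lt_succ_sqrt t
    have hexp : (a+1)*(a+1) = a*a + 2*a + 1 := by ring
    have haK : a < K := by rw [← ha]; exact Nat.sqrt_lt.mpr hA
    have haL : a < L := lt_of_lt_of_le haK hKL
    rcases lt_trichotomy (t - a*a) a with hs1 | hs2 | hs3
    · -- growing the bar on column a
      have hFt : Fprof K t = stair a a (a+1) (t - a*a) := by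
        unfold Fprof; rw [ha, if_pos hA.le, if_pos (by omega)]
      have hsq : Nat.sqrt (t+1) = a := sqrt_pin (by omega) (by omega)
      have hFt1 : Fprof K (t+1) = stair a a (a+1) (t+1 - a*a) := by
        unfold Fprof; rw [hsq, if_pos (by omega), if_pos (by omega)]
      refine ⟨a, haL, ?_, ?_, ?_⟩
      · rw [hFt]; simp only [stair]; split_ifs <;> omega
      · rw [hFt, hFt1]; simp only [stair]; split_ifs <;> omega
      · intro j hj; rw [hFt, hFt1]; simp only [stair]; split_ifs <;> omega
    · -- rectangle a×(a+1) complete: start a new row at column 0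
      rcases Nat.eq_zero_or_pos a with rfl | hapos
      · -- t = 0
        have ht0 : t = 0 := by omega
        subst ht0
        have hsq : Nat.sqrt 1 = 1 := by norm_num
        have hFt : Fprof K 0 = stair 0 0 1 0 := by
          unfold Fprof; rw [ha, if_pos (Nat.zero_le _), if_pos (by omega)]
        have hFt1 : Fprof K 1 = stair 1 1 2 0 := by
          unfold Fprof; rw [hsq, if_pos (by nlinarith), if_pos (by omega)]
        refine ⟨0, by omega, ?_, ?_, ?_⟩
        · rw [hFt]; simp only [stair]; split_ifs <;> omega
        · rw [hFt, hFt1]; simp only [stair]; split_ifs <;> omega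
        · intro j hj; rw [hFt, hFt1]; simp only [stair]; split_ifs <;> omega
      · have hFt : Fprof K t = stair a a (a+1) (t - a*a) := by
          unfold Fprof; rw [ha, if_pos hA.le, if_pos (by omega)]
        have hsq : Nat.sqrt (t+1) = a := sqrt_pin (by omega) (by omega)
        have hFt1 : Fprof K (t+1) = stair (t+1 - a*a - a) (a+1) (a+1) a := by
          unfold Fprof; rw [hsq, if_pos (by omega), if_neg (by omega)]
        refine ⟨0, by omega, ?_, ?_, ?_⟩
        · rw [hFt]; simp only [stair]; split_ifs <;> omega
        · rw [hFt, hFt1]; simp only [stair]; split_ifs <;> omega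
        · intro j hj; rw [hFt, hFt1]; simp only [stair]; split_ifs <;> omega
    · -- growing a new row
      have hs2a : t - a*a ≤ 2*a := by omega
      have hFt : Fprof K t = stair (t - a*a - a) (a+1) (a+1) a := by
        unfold Fprof; rw [ha, if_pos hA.le, if_neg (by omega)]
      rcases lt_or_eq_of_le hs2a with hs3a | hs3b
      · -- row not yet complete after this step
        have hsq : Nat.sqrt (t+1) = a := sqrt_pin (by omega) (by omega)
        have hFt1 : Fprof K (t+1) = stair (t+1 - a*a - a) (a+1) (a+1) a := by
          unfold Fprof; rw [hsq, if_pos (by omega), if_neg (by omega)]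
        refine ⟨t - a*a - a, by omega, ?_, ?_, ?_⟩
        · rw [hFt]; simp only [stair]; split_ifs <;> omega
        · rw [hFt, hFt1]; simp only [stair]; split_ifs <;> omega
        · intro j hj; rw [hFt, hFt1]; simp only [stair]; split_ifs <;> omega
      · -- completing the square (a+1)×(a+1)
        have hexp2 : (a+1+1)*(a+1+1) = a*a + 4*a + 4 := by ring
        have ht1 : t + 1 = (a+1)*(a+1) := by omega
        have hsq : Nat.sqrt (t+1) = a+1 := sqrt_pin (by omega) (by omega)
        have hK2' : (a+1)*(a+1) ≤ K*K := Nat.mul_le_mul haK haK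
        have hFt1 : Fprof K (t+1) = stair (a+1) (a+1) (a+2) (t + 1 - (a+1)*(a+1)) := by
          unfold Fprof; rw [hsq, if_pos (by omega), if_pos (by omega)]
        refine ⟨a, haL, ?_, ?_, ?_⟩
        · rw [hFt]; simp only [stair]; split_ifs <;> omega
        · rw [hFt, hFt1]; simp only [stair]; split_ifs <;> omega
        · intro j hj; rw [hFt, hFt1]; simp only [stair]; split_ifs <;> omega
  · -- t = K²: start the strip phase
    have hsq : Nat.sqrt t = K := sqrt_pin (by omega) (by nlinarith)
    have hFt : Fprof K t = stair K K (K+1) (t - K*K) := by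
      unfold Fprof; rw [hsq, if_pos hEq.le, if_pos (by omega)]
    have hd : (t+1 - K*K)/K = 0 := Nat.div_eq_of_lt (by omega)
    have hm' : (t+1 - K*K)%K = 1 := by rw [Nat.mod_eq_of_lt (by omega)]; omega
    have hFt1 : Fprof K (t+1) = stair K K (K+1) 1 := by
      unfold Fprof; rw [if_neg (by omega), hd, hm', Nat.add_zero]
    have hKLlt : K < L := by
      rcases Nat.lt_or_ge K L with h' | h'
      · exact h'
      · exfalso; have : L = K := by omega
        rw [this] at ht; omega
    refine ⟨K, hKLlt, ?_, ?_, ?_⟩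
    · rw [hFt]; simp only [stair]; split_ifs <;> omega
    · rw [hFt, hFt1]; simp only [stair]; split_ifs <;> omega
    · intro j hj; rw [hFt, hFt1]; simp only [stair]; split_ifs <;> omega
  · -- strip phase
    obtain ⟨d, hd⟩ : ∃ d, (t - K*K)/K = d := ⟨_, rfl⟩
    obtain ⟨l, hl⟩ : ∃ l, (t - K*K)%K = l := ⟨_, rfl⟩
    have hdm : K*d + l = t - K*K := by rw [← hd, ← hl]; exact Nat.div_add_mod _ K
    have hlK : l < K := by rw [← hl]; exact Nat.mod_lt _ (by omega)
    have hFt : Fprof K t = stair (K+d) K (K+d+1) l := by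
      unfold Fprof; rw [if_neg (by omega), hd, hl]
    have hmul : K*(L-K) = K*L - K*K := Nat.mul_sub K L K
    have hsub1 : t - K*K + K*K = t := Nat.sub_add_cancel hB.le
    have hsub2 : K*L - K*K + K*K = K*L := Nat.sub_add_cancel hKK
    have hdLK : d < L - K := by
      have h1 : K*d < K*L - K*K := by omega
      rw [← hmul] at h1
      exact Nat.lt_of_mul_lt_mul_left h1
    have hbL : K + d < L := by omega
    rcases Nat.lt_or_ge (l+1) K with hll | hlK2
    · have hdm1 : (t+1-K*K)/K = d ∧ (t+1-K*K)%K = l+1 :=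
        (Nat.div_mod_unique (by omega)).mpr ⟨by omega, hll⟩
      have hFt1 : Fprof K (t+1) = stair (K+d) K (K+d+1) (l+1) := by
        unfold Fprof; rw [if_neg (by omega), hdm1.1, hdm1.2]
      refine ⟨K+d, hbL, ?_, ?_, ?_⟩
      · rw [hFt]; simp only [stair]; split_ifs <;> omega
      · rw [hFt, hFt1]; simp only [stair]; split_ifs <;> omega
      · intro j hj; rw [hFt, hFt1]; simp only [stair]; split_ifs <;> omega
    · have hle : l + 1 = K := by omega
      have hmul2 : K*(d+1) = K*d + K := by ring
      have hdm1 : (t+1-K*K)/K = d+1 ∧ (t+1-K*K)%K = 0 :=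
        (Nat.div_mod_unique (by omega)).mpr ⟨by omega, by omega⟩
      have hFt1 : Fprof K (t+1) = stair (K+(d+1)) K (K+(d+1)+1) 0 := by
        unfold Fprof; rw [if_neg (by omega), hdm1.1, hdm1.2]
      refine ⟨K+d, hbL, ?_, ?_, ?_⟩
      · rw [hFt]; simp only [stair]; split_ifs <;> omega
      · rw [hFt, hFt1]; simp only [stair]; split_ifs <;> omega
      · intro j hj; rw [hFt, hFt1]; simp only [stair]; split_ifs <;> omega

lemma Fprof_zero (K : ℕ) : Fprof K 0 = stair 0 0 1 0 := by
  unfold Fprof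
  rw [if_pos (Nat.zero_le _)]
  norm_num

lemma Fprof_last (K L : ℕ) (hK : 0 < K) (hKL : K ≤ L) (j : ℕ) (hj : j < L) :
    Fprof K (K*L) j = K := by
  have hKK : K*K ≤ K*L := Nat.mul_le_mul_left K hKL
  rcases Nat.lt_or_ge (K*K) (K*L) with hc | hc
  · have hmul : K*(L-K) = K*L - K*K := Nat.mul_sub K L K
    have hd : (K*L - K*K)/K = L - K := by
      rw [← hmul]; exact Nat.mul_div_cancel_left (L-K) hK
    have hl : (K*L - K*K)%K = 0 := by rw [← hmul]; exact Nat.mul_mod_right K _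
    have hF : Fprof K (K*L) = stair (K+(L-K)) K (K+(L-K)+1) 0 := by
      unfold Fprof; rw [if_neg (by omega), hd, hl]
    rw [hF]; simp only [stair]; split_ifs <;> omega
  · have hLK : L = K := by
      have := Nat.le_of_mul_le_mul_left hc hK
      omega
    have hexp : (K+1)*(K+1) = K*K + 2*K + 1 := by ring
    have hsq : Nat.sqrt (K*L) = K := by
      subst hLK; exact sqrt_pin (le_refl _) (by omega)
    have hF : Fprof K (K*L) = stair K K (K+1) (K*L - K*K) := by
      unfold Fprof; rw [hsq, if_pos (by omega), if_pos (by omega)]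
    rw [hF]; simp only [stair]; split_ifs <;> omega

/-- A single growth step yields communicating configurations. -/
lemma comm_step (K L : ℕ) [NeZero K] [NeZero L] (m : ℕ) (hm : 2 ≤ m)
    (g g' : ℕ → ℕ) (j0 : ℕ) (hj0 : j0 < L) (hgK : g j0 < K)
    (hstep : g' j0 = g j0 + 1) (hoth : ∀ j, j ≠ j0 → g' j = g j) :
    Communicates K L (pcfg K L m g) (pcfg K L m g') := by
  have e1 : ((g j0 : ℕ) : ZMod K).val = g j0 := val_natCast_of_lt hgK
  have e2 : ((j0 : ℕ) : ZMod L).val = j0 := val_natCast_of_lt hj0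
  refine ⟨(((g j0 : ℕ) : ZMod K), ((j0 : ℕ) : ZMod L)), ?_, ?_⟩
  · unfold pcfg
    simp only [e1, e2]
    rw [if_neg (lt_irrefl _), hstep, if_pos (by omega)]
    omega
  · intro w hw
    unfold pcfg
    by_cases hw2 : w.2.val = j0
    · have hw2' : w.2 = ((j0 : ℕ) : ZMod L) := by
        apply ZMod.val_injective; rw [e2, hw2]
      have hw1 : w.1.val ≠ g j0 := by
        intro hc
        apply hw
        have hw1' : w.1 = ((g j0 : ℕ) : ZMod K) := by
          apply ZMod.val_injective; rw [e1, hc]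
        exact Prod.ext hw1' hw2'
      rw [hw2, hstep]
      split_ifs <;> omega
    · rw [hoth _ hw2]

lemma pcfg_isconf (q K L m : ℕ) (hm1 : 2 ≤ m) (hmq : m ≤ q) (g : ℕ → ℕ) :
    IsConf q K L (pcfg K L m g) := by
  intro v; unfold pcfg; split_ifs <;> omega

end Path

section Arith

variable (h : ℝ) (ℓ : ℕ)

lemma arithA1 (a : ℕ) (hl3 : 3 ≤ ℓ) (h2l : 2 < h*ℓ) (hl2 : h*((ℓ:ℝ)-1) < 2)
    (h0 : 0 < h) (h1 : h < 1) :
    4*(a:ℝ) + 2 - h*((a:ℝ)*a+1) ≤ 4*(ℓ:ℝ) - h*((ℓ:ℝ)*((ℓ:ℝ)-1)+1) := by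
  have hl1 : (3:ℝ) ≤ (ℓ:ℝ) := by exact_mod_cast hl3
  rcases Nat.lt_or_ge a ℓ with hal | hal
  · have hA : (a:ℝ) ≤ (ℓ:ℝ) - 1 := by
      have : (a:ℝ) + 1 ≤ (ℓ:ℝ) := by exact_mod_cast hal
      linarith
    have hA0 : (0:ℝ) ≤ (a:ℝ) := Nat.cast_nonneg a
    have hX : (0:ℝ) ≤ (ℓ:ℝ)*ℓ - ℓ - (a:ℝ)*a := by nlinarith
    have hfac : (0:ℝ) ≤ 2 - h*((ℓ:ℝ)-1) := by linarith
    nlinarith [mul_nonneg hfac hX, sq_nonneg ((ℓ:ℝ) - (a:ℝ) - 1)]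
  · have hA : (ℓ:ℝ) ≤ (a:ℝ) := by exact_mod_cast hal
    nlinarith [mul_nonneg (sub_nonneg.2 hA) (by linarith : (0:ℝ) ≤ h*ℓ - 2),
      mul_nonneg h0.le (sq_nonneg ((a:ℝ)-(ℓ:ℝ)))]

lemma arithA2 (a : ℕ) (hl3 : 3 ≤ ℓ) (h2l : 2 < h*ℓ) (hl2 : h*((ℓ:ℝ)-1) < 2)
    (h0 : 0 < h) (h1 : h < 1) :
    4*(a:ℝ) + 4 - h*((a:ℝ)*a+a+1) ≤ 4*(ℓ:ℝ) - h*((ℓ:ℝ)*((ℓ:ℝ)-1)+1) := by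
  have hl1 : (3:ℝ) ≤ (ℓ:ℝ) := by exact_mod_cast hl3
  rcases Nat.lt_or_ge a (ℓ-1) with hal | hal
  · have hA : (a:ℝ) ≤ (ℓ:ℝ) - 2 := by
      have : (a:ℝ) + 2 ≤ (ℓ:ℝ) := by
        have : a + 2 ≤ ℓ := by omega
        exact_mod_cast this
      linarith
    have hA0 : (0:ℝ) ≤ (a:ℝ) := Nat.cast_nonneg a
    have hfac : (0:ℝ) ≤ 4 - h*((ℓ:ℝ)+a) := by nlinarith
    nlinarith [mul_nonneg (by linarith : (0:ℝ) ≤ (ℓ:ℝ)-1-a) hfac]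
  · rcases Nat.lt_or_ge a ℓ with hal2 | hal2
    · have hA : (a:ℝ) = (ℓ:ℝ) - 1 := by
        have : a = ℓ - 1 := by omega
        rw [this]; push_cast [Nat.cast_sub (by omega : 1 ≤ ℓ)]; ring
      rw [hA]; ring_nf; nlinarith [sq_nonneg ((ℓ:ℝ))]
    · have hA : (ℓ:ℝ) ≤ (a:ℝ) := by exact_mod_cast hal2
      have hA0 : (0:ℝ) ≤ (a:ℝ) - ℓ := by linarith
      nlinarith [mul_nonneg hA0 (by nlinarith : (0:ℝ) ≤ h*((ℓ:ℝ)+a) - 4),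
        mul_nonneg h0.le (sq_nonneg ((a:ℝ)-(ℓ:ℝ)))]

lemma arithB (K : ℕ) (x : ℝ) (hl3 : 3 ≤ ℓ) (h2l : 2 < h*ℓ) (hl2 : h*((ℓ:ℝ)-1) < 2)
    (h0 : 0 < h) (h1 : h < 1) (hK : 3*ℓ ≤ K) (hx : (K:ℝ)*K ≤ x) :
    2*(K:ℝ) + 2 - h*x ≤ 4*(ℓ:ℝ) - h*((ℓ:ℝ)*((ℓ:ℝ)-1)+1) := by
  have hl1 : (3:ℝ) ≤ (ℓ:ℝ) := by exact_mod_cast hl3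
  have hKr : 3*(ℓ:ℝ) ≤ (K:ℝ) := by exact_mod_cast hK
  have hK9 : (9:ℝ) ≤ (K:ℝ) := by linarith
  have hhK : 6 < h*K := by nlinarith
  have hGam : 0 ≤ 4*(ℓ:ℝ) - h*((ℓ:ℝ)*((ℓ:ℝ)-1)+1) := by nlinarith
  have hhx : 2*(K:ℝ) + 2 ≤ h*x := by nlinarith
  linarith

end Arith

/-- The key estimate: every configuration along the growth path has energy
at most `-2KL + Γ`. -/
lemma energy_Fprof_le (K L : ℕ) [NeZero K] [NeZero L] (h : ℝ) (m : ℕ) (hm : 2 ≤ m)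
    (ℓ : ℕ) (hl3 : 3 ≤ ℓ) (h2l : 2 < h*ℓ) (hl2 : h*((ℓ:ℝ)-1) < 2)
    (h0 : 0 < h) (h1 : h < 1) (hK : 3*ℓ ≤ K) (hKL : K ≤ L)
    (t : ℕ) (ht : t ≤ K*L) :
    energy K L h (pcfg K L m (Fprof K t))
      ≤ -(2*(K:ℝ)*L) + (4*(ℓ:ℝ) - h*((ℓ:ℝ)*((ℓ:ℝ)-1)+1)) := by
  have hKpos : 0 < K := by omega
  have hKK : K*K ≤ K*L := Nat.mul_le_mul_left K hKL
  rcases Nat.lt_or_ge (K*K) t with hB | hA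
  · -- strip phase
    obtain ⟨d, hd⟩ : ∃ d, (t - K*K)/K = d := ⟨_, rfl⟩
    obtain ⟨l, hl⟩ : ∃ l, (t - K*K)%K = l := ⟨_, rfl⟩
    have hdm : K*d + l = t - K*K := by rw [← hd, ← hl]; exact Nat.div_add_mod _ K
    have hlK : l < K := by rw [← hl]; exact Nat.mod_lt _ (by omega)
    have hmul : K*(L-K) = K*L - K*K := Nat.mul_sub K L K
    have hsub1 : t - K*K + K*K = t := Nat.sub_add_cancel hB.le
    have hsub2 : K*L - K*K + K*K = K*L := Nat.sub_add_cancel hKK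
    have hdLK : d ≤ L - K := by
      have h1 : K*d ≤ K*L - K*K := by omega
      rw [← hmul] at h1
      exact Nat.le_of_mul_le_mul_left h1 hKpos
    have hbL : K + d ≤ L := by omega
    have hFt : Fprof K t = stair (K+d) K (K+d+1) l := by
      unfold Fprof; rw [if_neg (by omega), hd, hl]
    rcases Nat.lt_or_ge (K+d) L with hblt | hbeq
    · rw [hFt]
      have hmb := energy_stair_le K L h m hm (K+d) K (K+d+1) l (by omega) (by omega)
        (by omega) (le_refl K)
      refine le_trans hmb ?_
      have hif1 : (if 0 < K ∧ K < K then ((K+d : ℕ):ℝ) else 0) = 0 := by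
        rw [if_neg (by omega)]
      have hif2 : 2*(if 0 < l ∧ l < K then (((K+d+1 : ℕ)):ℝ) - ((K+d : ℕ):ℝ) else 0) ≤ 2 := by
        split_ifs with hc
        · push_cast; norm_num
        · norm_num
      have hmass : ((K:ℝ))*K ≤ ((K+d : ℕ):ℝ)*K + (((K+d+1 : ℕ):ℝ) - ((K+d : ℕ):ℝ))*l := by
        push_cast
        have : (0:ℝ) ≤ (d:ℝ) := Nat.cast_nonneg d
        have : (0:ℝ) ≤ (l:ℝ) := Nat.cast_nonneg l
        nlinarith [(by positivity : (0:ℝ) ≤ (d:ℝ)), (by positivity : (0:ℝ) ≤ (l:ℝ)),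
          (by positivity : (0:ℝ) ≤ (K:ℝ))]
      have harB := arithB h ℓ K (((K+d : ℕ):ℝ)*K + (((K+d+1 : ℕ):ℝ) - ((K+d : ℕ):ℝ))*l)
        hl3 h2l hl2 h0 h1 hK hmass
      rw [hif1]
      push_cast at hif2 harB ⊢
      linarith
    · -- full torus: t = K*L
      have hbeq' : K + d = L := by omega
      have hld : L - K = d := by omega
      have hKd : K*d = K*L - K*K := by rw [← hld, hmul]
      have hl0 : l = 0 := by omega
      rw [hFt, hl0, stair_v0, hbeq']
      have hmb := energy_stair_le K L h m hm L K L 0 (le_refl L) (le_refl L)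
        (by omega) (le_refl K)
      refine le_trans hmb ?_
      have hif1 : (if 0 < K ∧ K < K then ((L : ℕ):ℝ) else 0) = 0 := by
        rw [if_neg (by omega)]
      have hif2 : (if 0 < 0 ∧ 0 < K then ((L:ℝ) - (L:ℝ)) else 0) = 0 := by
        rw [if_neg (by omega)]
      have hmass : ((K:ℝ))*K ≤ (L:ℝ)*K + ((L:ℝ)-(L:ℝ))*0 := by
        have hLK : (K:ℝ) ≤ (L:ℝ) := by exact_mod_cast hKL
        nlinarith [(by positivity : (0:ℝ) ≤ (K:ℝ))]
      have harB := arithB h ℓ K ((L:ℝ)*K + ((L:ℝ)-(L:ℝ))*0) hl3 h2l hl2 h0 h1 hK hmass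
      rw [hif1, hif2]
      linarith
  · -- quasi-square phase
    obtain ⟨a, ha⟩ : ∃ a, Nat.sqrt t = a := ⟨_, rfl⟩
    have haa : a*a ≤ t := ha ▸ Nat.sqrt_le t
    have hlt : t < (a+1)*(a+1) := ha ▸ Nat.lt_succ_sqrt t
    have hexp : (a+1)*(a+1) = a*a + 2*a + 1 := by ring
    have haK : a ≤ K := by
      by_contra hc
      push_neg at hc
      have : K*K < a*a := Nat.mul_lt_mul_of_lt_of_le hc (by omega) (by omega)
      omega
    rcases lt_trichotomy (t - a*a) 0 with hs0 | hs0 | hs1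
    · omega
    · -- perfect square a×a
      have hFt : Fprof K t = stair a a (a+1) 0 := by
        unfold Fprof; rw [ha, if_pos hA, hs0, if_pos (Nat.zero_le _)]
      rw [hFt, stair_v0]
      have hmb := energy_stair_le K L h m hm a a a 0 (le_refl a) (by omega)
        (by omega) haK
      refine le_trans hmb ?_
      have hif2 : (if 0 < 0 ∧ 0 < K then ((a:ℝ) - (a:ℝ)) else 0) = 0 := by
        rw [if_neg (by omega)]
      have hif1 : (if 0 < a ∧ a < K then ((a : ℕ):ℝ) else 0) ≤ (a:ℝ) := by
        split_ifs
        · exact le_refl _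
        · positivity
      have har := arithA1 h ℓ a hl3 h2l hl2 h0 h1
      have hmm : (a:ℝ)*(a:ℝ) + ((a:ℝ)-(a:ℝ))*((0:ℕ):ℝ) = (a:ℝ)*(a:ℝ) := by
        push_cast; ring
      rw [hif2, hmm]
      linarith
    · -- nonempty bar or new row
      have haKlt : a < K := by
        rcases eq_or_lt_of_le haK with rfl | h'
        · omega
        · exact h'
      have hc1 : ((a+1 : ℕ):ℝ) = (a:ℝ) + 1 := by push_cast; ring
      rcases Nat.lt_or_ge a (t - a*a) with hs2 | hs2
      · -- A2 shape
        have hp1 : 1 ≤ t - a*a - a := by omega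
        have hpa : t - a*a - a ≤ a := by omega
        have hFt : Fprof K t = stair (t - a*a - a) (a+1) (a+1) a := by
          unfold Fprof; rw [ha, if_pos hA, if_neg (by omega)]
        rw [hFt]
        have hmb := energy_stair_le K L h m hm (t-a*a-a) (a+1) (a+1) a (by omega)
          (by omega) (by omega) (by omega)
        refine le_trans hmb ?_
        have hif1 : (if 0 < a+1 ∧ a+1 < K then ((t-a*a-a : ℕ):ℝ) else 0) ≤ ((t-a*a-a : ℕ):ℝ) := by
          split_ifs
          · exact le_refl _
          · positivity
        have hif2 : (if 0 < a ∧ a < K then (((a+1 : ℕ)):ℝ) - ((t-a*a-a : ℕ):ℝ) else 0)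
            ≤ ((a+1 : ℕ):ℝ) - ((t-a*a-a : ℕ):ℝ) := by
          split_ifs
          · exact le_refl _
          · have : ((t-a*a-a : ℕ):ℝ) ≤ ((a+1 : ℕ):ℝ) := by
              exact_mod_cast (by omega : t-a*a-a ≤ a+1)
            linarith
        have har := arithA2 h ℓ a hl3 h2l hl2 h0 h1
        have hpcast : (1:ℝ) ≤ ((t-a*a-a : ℕ):ℝ) := by exact_mod_cast hp1
        have hmasseq : ((t-a*a-a : ℕ):ℝ) * ((a+1 : ℕ):ℝ)
            + (((a+1 : ℕ):ℝ) - ((t-a*a-a : ℕ):ℝ)) * (a:ℝ)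
            = (a:ℝ)*(a:ℝ) + (a:ℝ) + ((t-a*a-a : ℕ):ℝ) := by
          rw [hc1]; ring
        rw [hmasseq]
        have hP2 : h*((a:ℝ)*(a:ℝ) + (a:ℝ) + 1) ≤ h*((a:ℝ)*(a:ℝ) + (a:ℝ) + ((t-a*a-a : ℕ):ℝ)) :=
          mul_le_mul_of_nonneg_left (by linarith) h0.le
        linarith
      · -- A1 shape with bar 1 ≤ s ≤ a
        have hFt : Fprof K t = stair a a (a+1) (t - a*a) := by
          unfold Fprof; rw [ha, if_pos hA, if_pos (by omega)]
        rw [hFt]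
        have hmb := energy_stair_le K L h m hm a a (a+1) (t-a*a) (by omega)
          (by omega) (by omega) haK
        refine le_trans hmb ?_
        have hif1 : (if 0 < a ∧ a < K then ((a : ℕ):ℝ) else 0) ≤ (a:ℝ) := by
          split_ifs
          · exact le_refl _
          · positivity
        have hif2 : (if 0 < t-a*a ∧ t-a*a < K then (((a+1 : ℕ)):ℝ) - ((a : ℕ):ℝ) else 0)
            ≤ 1 := by
          split_ifs
          · rw [hc1]; norm_num
          · norm_num
        have har := arithA1 h ℓ a hl3 h2l hl2 h0 h1
        have hscast : (1:ℝ) ≤ ((t-a*a : ℕ):ℝ) := by exact_mod_cast hs1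
        have hmasseq : (a:ℝ)*(a:ℝ) + (((a+1 : ℕ):ℝ) - ((a : ℕ):ℝ)) * ((t-a*a : ℕ):ℝ)
            = (a:ℝ)*(a:ℝ) + ((t-a*a : ℕ):ℝ) := by
          rw [hc1]; ring
        rw [hmasseq]
        have hP2 : h*((a:ℝ)*(a:ℝ) + 1) ≤ h*((a:ℝ)*(a:ℝ) + ((t-a*a : ℕ):ℝ)) :=
          mul_le_mul_of_nonneg_left (by linarith) h0.le
        linarith

/-- upper bound for the communication height:
`Φ(𝐦,𝟏) − H(𝐦) ≤ 4ℓ* − h(ℓ*(ℓ*−1)+1)` for every `m ∈ {2,…,q}`. -/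
theorem comm_height_upper_bound (q K L : ℕ) [NeZero K] [NeZero L] (h : ℝ)
    (hq : 2 < q) (hh0 : 0 < h) (hh1 : h < 1)
    (hhint : ¬ ∃ n : ℤ, (2 : ℝ) / h = (n : ℝ))
    (hK : 3 * ellStar h ≤ K) (hKL : K ≤ L) :
    ∀ m, 2 ≤ m → m ≤ q →
      Phi q K L h (const K L m) (const K L 1) - energy K L h (const K L m)
        ≤ Gamma h := by
  intro m hm2 hmq
  -- facts about the critical length
  have h2h : (2:ℝ)/h ≤ (ellStar h : ℝ) := Nat.le_ceil _
  have hne : (2:ℝ)/h ≠ (ellStar h : ℝ) := by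
    intro hc; exact hhint ⟨(ellStar h : ℤ), by rw [hc]; push_cast; ring⟩
  have h2lt : (2:ℝ)/h < (ellStar h : ℝ) := lt_of_le_of_ne h2h hne
  have h2l : 2 < h * (ellStar h : ℝ) := by
    rw [div_lt_iff₀ hh0] at h2lt; linarith
  have hl2 : h*((ellStar h:ℝ)-1) < 2 := by
    have hcl : ((ellStar h : ℕ):ℝ) < 2/h + 1 := Nat.ceil_lt_add_one (by positivity)
    have h2 : (ellStar h : ℝ) - 1 < 2/h := by linarith
    rw [lt_div_iff₀ hh0] at h2; linarith
  have hl3 : 3 ≤ ellStar h := by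
    have h2r : (2:ℝ) < 2/h := by rw [lt_div_iff₀ hh0]; linarith
    have hgt : (2:ℝ) < (ellStar h : ℝ) := lt_of_lt_of_le h2r h2h
    have : 2 < ellStar h := by exact_mod_cast hgt
    omega
  have hK9 : 9 ≤ K := by omega
  set ω := (List.range (K*L+1)).map (fun t => pcfg K L m (Fprof K t)) with hω
  have hstart : pcfg K L m (Fprof K 0) = const K L m := by
    funext v
    rw [Fprof_zero]
    simp only [pcfg, stair, const]
    split_ifs <;> omega
  have hend : pcfg K L m (Fprof K (K*L)) = const K L 1 := by
    funext v
    have hvL : v.2.val < L := ZMod.val_lt v.2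
    have hlast := Fprof_last K L (by omega) hKL v.2.val hvL
    simp only [pcfg, const]
    rw [hlast, if_pos (ZMod.val_lt v.1)]
  have hωpath : IsPath q K L (const K L m) (const K L 1) ω := by
    refine ⟨?_, ?_, ?_, ?_⟩
    · rw [hω, List.range_succ_eq_map, List.map_cons, List.head?_cons, hstart]
    · rw [hω, List.range_succ, List.map_append, List.map_cons, List.map_nil,
        List.getLast?_concat, hend]
    · rw [hω]; show List.IsChain _ _; rw [List.isChain_map, List.isChain_range_succ]
      intro t ht
      obtain ⟨j0, hj0L, hlt, hstep, hoth⟩ := Fprof_succ K L t (by omega) hKL ht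
      exact comm_step K L m hm2 _ _ j0 hj0L hlt hstep hoth
    · intro η hη
      rw [hω] at hη
      obtain ⟨t, _, rfl⟩ := List.mem_map.mp hη
      exact pcfg_isconf q K L m hm2 hmq _
  have hconstm : energy K L h (const K L m) = -(2*(K:ℝ)*L) := by
    rw [← hstart, Fprof_zero,
      energy_pcfg K L h m hm2 _ (by intro j; unfold stair; split_ifs <;> omega)]
    have hz : ∀ j, stair 0 0 1 0 j = 0 := by intro j; unfold stair; split_ifs <;> rfl
    simp [hz]
  have hGam : Gamma h = 4*(ellStar h:ℝ) - h*((ellStar h:ℝ)*((ellStar h:ℝ)-1)+1) := rfl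
  have hHb : ∀ η ∈ ω, energy K L h η ≤ -(2*(K:ℝ)*L) + Gamma h := by
    intro η hη
    rw [hω] at hη
    obtain ⟨t, htm, rfl⟩ := List.mem_map.mp hη
    have ht : t ≤ K*L := by have := List.mem_range.mp htm; omega
    rw [hGam]
    exact energy_Fprof_le K L h m hm2 (ellStar h) hl3 h2l hl2 hh0 hh1 hK hKL t ht
  have hmem0 : pcfg K L m (Fprof K 0) ∈ ω := by
    rw [hω]
    exact List.mem_map.mpr ⟨0, List.mem_range.mpr (by omega), rfl⟩
  have hheight : height K L h ω ≤ -(2*(K:ℝ)*L) + Gamma h := by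
    unfold height
    apply csSup_le
    · exact ⟨energy K L h (pcfg K L m (Fprof K 0)), ⟨pcfg K L m (Fprof K 0), hmem0, rfl⟩⟩
    · rintro x ⟨η, hη, rfl⟩
      exact hHb η hη
  have hmemheight : height K L h ω ∈
      height K L h '' {ω' | IsPath q K L (const K L m) (const K L 1) ω'} := ⟨ω, hωpath, rfl⟩
  have hbdd : BddBelow
      (height K L h '' {ω' | IsPath q K L (const K L m) (const K L 1) ω'}) := by
    refine ⟨-(2*(K:ℝ)*L), ?_⟩
    rintro x ⟨ω', hω', rfl⟩
    have hmem : const K L m ∈ ω' := List.mem_of_mem_head? (by rw [hω'.1]; exact rfl)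
    have hfin : (energy K L h '' {η | η ∈ ω'}).Finite := (ω'.finite_toSet).image _
    have hle : energy K L h (const K L m) ≤ height K L h ω' :=
      le_csSup hfin.bddAbove ⟨const K L m, hmem, rfl⟩
    rw [hconstm] at hle
    exact hle
  have hPhi : Phi q K L h (const K L m) (const K L 1) ≤ -(2*(K:ℝ)*L) + Gamma h :=
    le_trans (csInf_le hbdd hmemheight) hheight
  rw [hconstm]
  linarith

end PottsPos
end

section
/- Lower bound for the communication height: for every m ∈ {2,…,q}, Φ(𝐦, 𝟏) − H(𝐦) ≥ 4ℓ* − h(ℓ*(ℓ*−1)+1). -/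
/-!
Metastability for the q-state Potts model with positive external magnetic field
on the K × L torus, under Glauber (single-spin-flip) dynamics.
-/

namespace PottsPos

section Cycle
open Finset
variable {n : ℕ} [NeZero n]

lemma cycle_exit_aux (f : ZMod n → Prop) [DecidablePred f] :
    ∀ (k : ℕ) (a : ZMod n), f a → ¬ f (a + k) → ∃ y, f y ∧ ¬ f (y + 1) := by
  intro k
  induction k with
  | zero => intro a ha hb; simp only [Nat.cast_zero, add_zero] at hb; exact absurd ha hb
  | succ k ih =>
    intro a ha hb
    by_cases hk : f (a + k)
    · refine ⟨a + k, hk, ?_⟩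
      have : a + (k:ZMod n) + 1 = a + ((k+1 : ℕ) : ZMod n) := by push_cast; ring
      rwa [this]
    · exact ih a ha hk

lemma cycle_exit (f : ZMod n → Prop) [DecidablePred f] (a b : ZMod n)
    (ha : f a) (hb : ¬ f b) : ∃ y, f y ∧ ¬ f (y + 1) := by
  have h1 : a + (((b - a).val : ℕ) : ZMod n) = b := by
    rw [ZMod.natCast_val, ZMod.cast_id]; ring
  exact cycle_exit_aux f (b - a).val a ha (by rwa [h1])

lemma cycle_enter (f : ZMod n → Prop) [DecidablePred f] (a b : ZMod n)
    (ha : f a) (hb : ¬ f b) : ∃ y, ¬ f y ∧ f (y + 1) := by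
  obtain ⟨y, hy, hy'⟩ := cycle_exit (fun z => ¬ f z) b a hb (not_not_intro ha)
  exact ⟨y, hy, not_not.mp hy'⟩

lemma ivt {α : Type*} (g : α → ℕ) (t : ℕ) :
    ∀ (ω : List α) (a b : α), ω.Chain' (fun x y => g y ≤ g x + 1) →
      ω.head? = some a → ω.getLast? = some b → g a ≤ t → t ≤ g b →
      ∃ η ∈ ω, g η = t := by
  intro ω
  induction ω with
  | nil => intro a b _ hh; simp at hh
  | cons x xs ih =>
    intro a b hchain hhead hlast hga hgb
    have hxa : x = a := by simpa using hhead
    subst hxa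
    cases xs with
    | nil =>
      have hxb : x = b := by simpa using hlast
      subst hxb
      exact ⟨x, by simp, le_antisymm hga hgb⟩
    | cons x' xs' =>
      rcases eq_or_lt_of_le hga with heq | hlt
      · exact ⟨x, by simp, heq⟩
      · have hch := List.isChain_cons_cons.mp hchain
        obtain ⟨η, hη, hgη⟩ := ih x' b hch.2 rfl
          (by simpa using hlast) (le_trans hch.1 hlt) hgb
        exact ⟨η, List.mem_cons_of_mem _ hη, hgη⟩

end Cycle

open Finset
variable {K L : ℕ} [NeZero K] [NeZero L]

def onesF (K L : ℕ) [NeZero K] [NeZero L] (σ : Cfg K L) : Finset (Vtx K L) :=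
  univ.filter fun v => σ v = 1
def dH (K L : ℕ) [NeZero K] [NeZero L] (σ : Cfg K L) : Finset (Vtx K L) :=
  univ.filter fun v => ¬ σ v = σ (v.1, v.2 + 1)
def dV (K L : ℕ) [NeZero K] [NeZero L] (σ : Cfg K L) : Finset (Vtx K L) :=
  univ.filter fun v => ¬ σ v = σ (v.1 + 1, v.2)

lemma card_vtx : Fintype.card (Vtx K L) = K * L := by
  simp [Fintype.card_prod, ZMod.card]

lemma energy_eq (h : ℝ) (σ : Cfg K L) :
    energy K L h σ = ((dV K L σ).card + (dH K L σ).card : ℝ)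
      - h * (onesF K L σ).card - 2 * (K * L) := by
  have hV : (univ.filter fun v : Vtx K L => σ v = σ (v.1 + 1, v.2)).card
      + (dV K L σ).card = K * L := by
    rw [dV, Finset.card_filter_add_card_filter_not, card_univ, card_vtx]
  have hH : (univ.filter fun v : Vtx K L => σ v = σ (v.1, v.2 + 1)).card
      + (dH K L σ).card = K * L := by
    rw [dH, Finset.card_filter_add_card_filter_not, card_univ, card_vtx]
  rw [energy, Finset.sum_add_distrib, Finset.sum_boole, Finset.sum_boole, Finset.sum_boole]
  have := congrArg (fun x : ℕ => (x : ℝ)) hV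
  have := congrArg (fun x : ℕ => (x : ℝ)) hH
  push_cast at *
  rw [onesF]
  push_cast
  linarith

lemma energy_const (h : ℝ) (m : ℕ) (hm : m ≠ 1) :
    energy K L h (const K L m) = -(2 * (K * L)) := by
  rw [energy_eq]
  have h1 : dV K L (const K L m) = ∅ := by simp [dV, const]
  have h2 : dH K L (const K L m) = ∅ := by simp [dH, const]
  have h3 : onesF K L (const K L m) = ∅ := by simp [onesF, const, hm]
  rw [h1, h2, h3]; simp

lemma onesF_const_one : (onesF K L (const K L 1)).card = K * L := by
  have : onesF K L (const K L 1) = univ := by simp [onesF, const]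
  rw [this, card_univ, card_vtx]

lemma comm_step_s5 (σ σ' : Cfg K L) (hc : Communicates K L σ σ') :
    (onesF K L σ').card ≤ (onesF K L σ).card + 1 := by
  obtain ⟨v, _, hw⟩ := hc
  have hsub : onesF K L σ' ⊆ insert v (onesF K L σ) := by
    intro w hwmem
    simp only [onesF, mem_filter, mem_univ, true_and] at hwmem
    by_cases h' : w = v
    · simp [h']
    · exact Finset.mem_insert_of_mem (by simp [onesF, (hw w h').trans hwmem])
  calc (onesF K L σ').card ≤ (insert v (onesF K L σ)).card := Finset.card_le_card hsub
    _ ≤ (onesF K L σ).card + 1 := Finset.card_insert_le _ _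


lemma dH_bound (σ : Cfg K L) :
    2 * ((univ.filter fun x : ZMod K =>
        (∃ y, σ (x,y) = 1) ∧ ¬ ∀ y, σ (x,y) = 1).card) ≤ (dH K L σ).card := by
  classical
  set Ro := univ.filter fun x : ZMod K => (∃ y, σ (x,y) = 1) ∧ ¬ ∀ y, σ (x,y) = 1 with hRo
  have key : ∀ x ∈ Ro, 2 ≤ ((dH K L σ).filter fun v => v.1 = x).card := by
    intro x hx
    simp only [hRo, mem_filter, mem_univ, true_and] at hx
    obtain ⟨⟨y0, hy0⟩, hnf⟩ := hx
    push_neg at hnf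
    obtain ⟨y1, hy1⟩ := hnf
    obtain ⟨a, ha, ha'⟩ := cycle_exit (fun y => σ (x,y) = 1) y0 y1 hy0 hy1
    obtain ⟨b, hb, hb'⟩ := cycle_enter (fun y => σ (x,y) = 1) y0 y1 hy0 hy1
    have hab : a ≠ b := fun hh => hb (hh ▸ ha)
    have hmem1 : (x, a) ∈ (dH K L σ).filter fun v => v.1 = x := by
      simp only [dH, mem_filter, mem_univ, true_and]
      exact ⟨fun hh => ha' (hh ▸ ha), trivial⟩
    have hmem2 : (x, b) ∈ (dH K L σ).filter fun v => v.1 = x := by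
      simp only [dH, mem_filter, mem_univ, true_and]
      exact ⟨fun hh => hb (hh ▸ hb'), trivial⟩
    have : ({(x,a), (x,b)} : Finset (Vtx K L)) ⊆ (dH K L σ).filter fun v => v.1 = x := by
      intro v hv
      rcases Finset.mem_insert.mp hv with rfl | hv
      · exact hmem1
      · rw [Finset.mem_singleton.mp hv]; exact hmem2
    calc 2 = ({(x,a), (x,b)} : Finset (Vtx K L)).card := by
            rw [Finset.card_insert_of_notMem (by simp [hab]), Finset.card_singleton]
      _ ≤ _ := Finset.card_le_card this
  calc 2 * Ro.card = ∑ _x ∈ Ro, 2 := by rw [Finset.sum_const, smul_eq_mul, mul_comm]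
    _ ≤ ∑ x ∈ Ro, ((dH K L σ).filter fun v => v.1 = x).card := Finset.sum_le_sum key
    _ ≤ ∑ x ∈ univ, ((dH K L σ).filter fun v => v.1 = x).card :=
        Finset.sum_le_sum_of_subset (Finset.subset_univ _)
    _ = (dH K L σ).card :=
        (Finset.card_eq_sum_card_fiberwise (fun v _ => Finset.mem_univ v.1)).symm

lemma dV_bound (σ : Cfg K L) :
    2 * ((univ.filter fun y : ZMod L =>
        (∃ x, σ (x,y) = 1) ∧ ¬ ∀ x, σ (x,y) = 1).card) ≤ (dV K L σ).card := by
  classical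
  set Co := univ.filter fun y : ZMod L => (∃ x, σ (x,y) = 1) ∧ ¬ ∀ x, σ (x,y) = 1 with hCo
  have key : ∀ y ∈ Co, 2 ≤ ((dV K L σ).filter fun v => v.2 = y).card := by
    intro y hy
    simp only [hCo, mem_filter, mem_univ, true_and] at hy
    obtain ⟨⟨x0, hx0⟩, hnf⟩ := hy
    push_neg at hnf
    obtain ⟨x1, hx1⟩ := hnf
    obtain ⟨a, ha, ha'⟩ := cycle_exit (fun x => σ (x,y) = 1) x0 x1 hx0 hx1
    obtain ⟨b, hb, hb'⟩ := cycle_enter (fun x => σ (x,y) = 1) x0 x1 hx0 hx1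
    have hab : a ≠ b := fun hh => hb (hh ▸ ha)
    have hmem1 : (a, y) ∈ (dV K L σ).filter fun v => v.2 = y := by
      simp only [dV, mem_filter, mem_univ, true_and]
      exact ⟨fun hh => ha' (hh ▸ ha), trivial⟩
    have hmem2 : (b, y) ∈ (dV K L σ).filter fun v => v.2 = y := by
      simp only [dV, mem_filter, mem_univ, true_and]
      exact ⟨fun hh => hb (hh ▸ hb'), trivial⟩
    have : ({(a,y), (b,y)} : Finset (Vtx K L)) ⊆ (dV K L σ).filter fun v => v.2 = y := by
      intro v hv
      rcases Finset.mem_insert.mp hv with rfl | hv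
      · exact hmem1
      · rw [Finset.mem_singleton.mp hv]; exact hmem2
    calc 2 = ({(a,y), (b,y)} : Finset (Vtx K L)).card := by
            rw [Finset.card_insert_of_notMem (by simp [hab]), Finset.card_singleton]
      _ ≤ _ := Finset.card_le_card this
  calc 2 * Co.card = ∑ _y ∈ Co, 2 := by rw [Finset.sum_const, smul_eq_mul, mul_comm]
    _ ≤ ∑ y ∈ Co, ((dV K L σ).filter fun v => v.2 = y).card := Finset.sum_le_sum key
    _ ≤ ∑ y ∈ univ, ((dV K L σ).filter fun v => v.2 = y).card :=
        Finset.sum_le_sum_of_subset (Finset.subset_univ _)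
    _ = (dV K L σ).card :=
        (Finset.card_eq_sum_card_fiberwise (fun v _ => Finset.mem_univ v.2)).symm


lemma iso (σ : Cfg K L) (ℓ : ℕ) (hl : 1 ≤ ℓ) (hK : 3 * ℓ ≤ K) (hKL : K ≤ L)
    (hones : (onesF K L σ).card = ℓ * (ℓ - 1) + 1) :
    4 * ℓ ≤ (dH K L σ).card + (dV K L σ).card := by
  classical
  obtain ⟨p, rfl⟩ : ∃ p, ℓ = p + 1 := ⟨ℓ - 1, by omega⟩
  simp only [Nat.add_sub_cancel] at hones
  set Rocc := univ.filter fun x : ZMod K => ∃ y, σ (x,y) = 1 with hRoccDef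
  set Cocc := univ.filter fun y : ZMod L => ∃ x, σ (x,y) = 1 with hCoccDef
  set Rfull := univ.filter fun x : ZMod K => ∀ y, σ (x,y) = 1 with hRfullDef
  set Cfull := univ.filter fun y : ZMod L => ∀ x, σ (x,y) = 1 with hCfullDef
  have hsub : onesF K L σ ⊆ Rocc ×ˢ Cocc := by
    intro v hv
    simp only [onesF, mem_filter, mem_univ, true_and] at hv
    simp only [hRoccDef, hCoccDef, Finset.mem_product, mem_filter, mem_univ, true_and]
    exact ⟨⟨v.2, by rwa [Prod.mk.eta]⟩, ⟨v.1, by rwa [Prod.mk.eta]⟩⟩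
  have hprod : (p + 1) * p + 1 ≤ Rocc.card * Cocc.card := by
    calc (p+1) * p + 1 = (onesF K L σ).card := hones.symm
      _ ≤ (Rocc ×ˢ Cocc).card := Finset.card_le_card hsub
      _ = Rocc.card * Cocc.card := Finset.card_product _ _
  have hKc : Fintype.card (ZMod K) = K := ZMod.card K
  have hLc : Fintype.card (ZMod L) = L := ZMod.card L
  rcases Finset.eq_empty_or_nonempty Rfull with hRe | hRne
  · rcases Finset.eq_empty_or_nonempty Cfull with hCe | hCne
    · -- Case 1: no full rows, no full columns
      have hR : Rocc ⊆ univ.filter fun x : ZMod K =>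
          (∃ y, σ (x,y) = 1) ∧ ¬ ∀ y, σ (x,y) = 1 := by
        intro x hx
        simp only [hRoccDef, mem_filter, mem_univ, true_and] at hx
        simp only [mem_filter, mem_univ, true_and]
        refine ⟨hx, fun hfull => ?_⟩
        have : x ∈ Rfull := by simp [hRfullDef, hfull]
        simp [hRe] at this
      have hC : Cocc ⊆ univ.filter fun y : ZMod L =>
          (∃ x, σ (x,y) = 1) ∧ ¬ ∀ x, σ (x,y) = 1 := by
        intro y hy
        simp only [hCoccDef, mem_filter, mem_univ, true_and] at hy
        simp only [mem_filter, mem_univ, true_and]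
        refine ⟨hy, fun hfull => ?_⟩
        have : y ∈ Cfull := by simp [hCfullDef, hfull]
        simp [hCe] at this
      have h1 : 2 * Rocc.card ≤ (dH K L σ).card :=
        le_trans (Nat.mul_le_mul_left 2 (Finset.card_le_card hR)) (dH_bound σ)
      have h2 : 2 * Cocc.card ≤ (dV K L σ).card :=
        le_trans (Nat.mul_le_mul_left 2 (Finset.card_le_card hC)) (dV_bound σ)
      have hrc : 2 * (p + 1) ≤ Rocc.card + Cocc.card := by
        by_contra hcon
        push_neg at hcon
        nlinarith [hprod, sq_nonneg (Rocc.card - Cocc.card : ℤ)]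
      omega
    · -- Case: full column exists, no full rows
      obtain ⟨y0, hy0⟩ := hCne
      simp only [hCfullDef, mem_filter, mem_univ, true_and] at hy0
      have hRall : (univ.filter fun x : ZMod K =>
          (∃ y, σ (x,y) = 1) ∧ ¬ ∀ y, σ (x,y) = 1) = univ := by
        apply Finset.eq_univ_of_forall
        intro x
        simp only [mem_filter, mem_univ, true_and]
        refine ⟨⟨y0, hy0 x⟩, fun hfull => ?_⟩
        have : x ∈ Rfull := by simp [hRfullDef, hfull]
        simp [hRe] at this
      have h1 : 2 * K ≤ (dH K L σ).card := by
        have := dH_bound σ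
        rwa [hRall, card_univ, hKc] at this
      omega
  · rcases Finset.eq_empty_or_nonempty Cfull with hCe | hCne
    · -- Case: full row exists, no full columns
      obtain ⟨x0, hx0⟩ := hRne
      simp only [hRfullDef, mem_filter, mem_univ, true_and] at hx0
      have hCall : (univ.filter fun y : ZMod L =>
          (∃ x, σ (x,y) = 1) ∧ ¬ ∀ x, σ (x,y) = 1) = univ := by
        apply Finset.eq_univ_of_forall
        intro y
        simp only [mem_filter, mem_univ, true_and]
        refine ⟨⟨x0, hx0 y⟩, fun hfull => ?_⟩
        have : y ∈ Cfull := by simp [hCfullDef, hfull]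
        simp [hCe] at this
      have h1 : 2 * L ≤ (dV K L σ).card := by
        have := dV_bound σ
        rwa [hCall, card_univ, hLc] at this
      omega
    · -- Case: both a full row and a full column
      obtain ⟨y0, hy0⟩ := hCne
      simp only [hCfullDef, mem_filter, mem_univ, true_and] at hy0
      -- every row is occupied
      have hRfullL : Rfull.card * L ≤ (p + 1) * p + 1 := by
        have hsub2 : Rfull ×ˢ (univ : Finset (ZMod L)) ⊆ onesF K L σ := by
          intro v hv
          simp only [Finset.mem_product, hRfullDef, mem_filter, mem_univ, true_and, and_true] at hv
          simp only [onesF, mem_filter, mem_univ, true_and]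
          have := hv v.2
          rwa [Prod.mk.eta] at this
        calc Rfull.card * L = (Rfull ×ˢ (univ : Finset (ZMod L))).card := by
              rw [Finset.card_product, card_univ, hLc]
          _ ≤ (onesF K L σ).card := Finset.card_le_card hsub2
          _ = (p+1) * p + 1 := hones
      have hRfull_le : Rfull.card ≤ p + 1 := by
        by_contra hcon
        push_neg at hcon
        have : (p + 2) * (3 * (p + 1)) ≤ Rfull.card * L :=
          Nat.mul_le_mul hcon (le_trans hK hKL)
        nlinarith
      have hRdiff : univ \ Rfull ⊆ univ.filter fun x : ZMod K =>
          (∃ y, σ (x,y) = 1) ∧ ¬ ∀ y, σ (x,y) = 1 := by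
        intro x hx
        simp only [Finset.mem_sdiff, hRfullDef, mem_filter, mem_univ, true_and] at hx
        simp only [mem_filter, mem_univ, true_and]
        exact ⟨⟨y0, hy0 x⟩, hx⟩
      have hcard : K - Rfull.card ≤ (univ.filter fun x : ZMod K =>
          (∃ y, σ (x,y) = 1) ∧ ¬ ∀ y, σ (x,y) = 1).card := by
        calc K - Rfull.card = (univ \ Rfull).card := by
              rw [Finset.card_sdiff_of_subset (Finset.subset_univ _), card_univ, hKc]
          _ ≤ _ := Finset.card_le_card hRdiff
      have h1 : 2 * (K - Rfull.card) ≤ (dH K L σ).card :=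
        le_trans (Nat.mul_le_mul_left 2 hcard) (dH_bound σ)
      omega


/-- lower bound for the communication height:
`Φ(𝐦,𝟏) − H(𝐦) ≥ 4ℓ* − h(ℓ*(ℓ*−1)+1)` for every `m ∈ {2,…,q}`. -/

theorem comm_height_lower_bound (q K L : ℕ) [NeZero K] [NeZero L] (h : ℝ)
    (hq : 2 < q) (hh0 : 0 < h) (hh1 : h < 1)
    (hhint : ¬ ∃ n : ℤ, (2 : ℝ) / h = (n : ℝ))
    (hK : 3 * ellStar h ≤ K) (hKL : K ≤ L) :
    ∀ m, 2 ≤ m → m ≤ q →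
      Gamma h ≤
        Phi q K L h (const K L m) (const K L 1) - energy K L h (const K L m) := by
  intro m hm2 hmq
  have hl3 : 3 ≤ ellStar h := by
    have h2 : (2:ℝ) < 2 / h := by
      rw [lt_div_iff₀ hh0]; nlinarith
    have h3 : (2:ℕ) < ellStar h := Nat.lt_ceil.mpr (by exact_mod_cast h2)
    omega
  set ℓ := ellStar h with hℓ
  have hm1 : m ≠ 1 := by omega
  have hEc : energy K L h (const K L m) = -(2 * ((K:ℝ) * L)) := energy_const h m hm1
  have hGA : Gamma h = 4 * (ℓ:ℝ) - h * ((ℓ * (ℓ - 1) + 1 : ℕ) : ℝ) := by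
    rw [Gamma]
    push_cast [Nat.cast_sub (by omega : 1 ≤ ℓ)]
    ring
  have hcastl : (3:ℝ) ≤ (ℓ:ℝ) := by exact_mod_cast hl3
  have hcastK : 3 * (ℓ:ℝ) ≤ (K:ℝ) := by exact_mod_cast hK
  have hcastKL : (K:ℝ) ≤ (L:ℝ) := by exact_mod_cast hKL
  have hAKL : ℓ * (ℓ - 1) + 1 ≤ K * L := by
    have h1 : ℓ * (ℓ - 1) + 1 ≤ ℓ * ℓ := by
      have h0 : ℓ - 1 + 1 = ℓ := by omega
      calc ℓ * (ℓ - 1) + 1 ≤ ℓ * (ℓ - 1) + ℓ := by omega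
        _ = ℓ * (ℓ - 1 + 1) := by ring
        _ = ℓ * ℓ := by rw [h0]
    have h2 : ℓ * ℓ ≤ K * L := Nat.mul_le_mul (by omega) (le_trans (by omega) hKL)
    omega
  rw [hEc, le_sub_iff_add_le]
  unfold Phi
  rcases Set.eq_empty_or_nonempty
      (height K L h '' {ω | IsPath q K L (const K L m) (const K L 1) ω}) with hemp | hne
  · rw [hemp, Real.sInf_empty]
    have hg : Gamma h ≤ 4 * (ℓ:ℝ) := by
      rw [hGA]
      have : (0:ℝ) ≤ h * ((ℓ * (ℓ - 1) + 1 : ℕ) : ℝ) := by positivity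
      linarith
    nlinarith
  · apply le_csInf hne
    rintro b ⟨ω, hω, rfl⟩
    obtain ⟨hhead, hlast, hchain, hvalid⟩ := hω
    have hchain' : ω.Chain' (fun x y => (onesF K L y).card ≤ (onesF K L x).card + 1) :=
      hchain.imp (fun a b hc => comm_step_s5 a b hc)
    have hg0 : (onesF K L (const K L m)).card = 0 := by
      simp [onesF, const, hm1]
    obtain ⟨η, hηmem, hηA⟩ := ivt (fun σ => (onesF K L σ).card) (ℓ * (ℓ - 1) + 1) ω _ _
      hchain' hhead hlast
      (by show (onesF K L (const K L m)).card ≤ _; rw [hg0]; omega)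
      (by show _ ≤ (onesF K L (const K L 1)).card; rw [onesF_const_one]; exact hAKL)
    have hηA' : (onesF K L η).card = ℓ * (ℓ - 1) + 1 := hηA
    have hiso := iso η ℓ (by omega) hK hKL hηA'
    have hEη : Gamma h + -(2 * ((K:ℝ) * L)) ≤ energy K L h η := by
      rw [energy_eq, hηA', hGA]
      have hc : (4:ℝ) * ℓ ≤ ((dH K L η).card : ℝ) + ((dV K L η).card : ℝ) := by
        exact_mod_cast hiso
      push_cast
      push_cast at hc
      linarith
    refine le_trans hEη ?_
    unfold height
    apply le_csSup
    · exact ((ω.finite_toSet).image _).bddAbove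
    · exact ⟨η, hηmem, rfl⟩


end PottsPos
end

section
/- For every m ∈ {2,…,q} and every configuration σ ∈ R̄_{ℓ*−1,ℓ*}(m,1) (all spins m except a quasi-square (ℓ*−1)×ℓ* of spins 1), there exists a path γ from σ to the constant configuration 𝐦 whose maximum energy satisfies max_{ξ∈γ} H(ξ) < 4ℓ* − h(ℓ*(ℓ*−1)+1) + H(𝐦). -/
/-!
Metastability for the q-state Potts model with positive external magnetic field
on the K × L torus, under Glauber (single-spin-flip) dynamics.
-/

namespace PottsPos

open Classical in
/-- indicator of a proposition -/
noncomputable def chi (P : Prop) : ℝ := if P then 1 else 0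

lemma chi_true {P : Prop} (h : P) : chi P = 1 := by simp [chi, h]
lemma chi_false {P : Prop} (h : ¬ P) : chi P = 0 := by simp [chi, h]

lemma zmod_one_ne_zero {K : ℕ} (hK : 2 ≤ K) : (1 : ZMod K) ≠ 0 := by
  intro hcontra
  have h1 : ((1:ℕ) : ZMod K).val = 1 := ZMod.val_cast_of_lt (by omega)
  rw [Nat.cast_one, hcontra] at h1
  simp at h1

lemma zmod_add_one_ne {K : ℕ} (hK : 2 ≤ K) (x : ZMod K) : x + 1 ≠ x := by
  intro hcontra
  have : (1 : ZMod K) = 0 := by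
    have := congrArg (fun z => z - x) hcontra
    simpa [add_comm] using this
  exact zmod_one_ne_zero hK this

lemma zmod_sub_one_ne {K : ℕ} (hK : 2 ≤ K) (x : ZMod K) : x - 1 ≠ x := by
  intro hcontra
  have : x = x + 1 := by
    have := congrArg (fun z => z + 1) hcontra
    simpa using this.symm
  exact zmod_add_one_ne hK x this.symm

lemma zmod_cast_inj {K : ℕ} [NeZero K] {i j : ℕ} (hi : i < K) (hj : j < K)
    (hij : (i : ZMod K) = (j : ZMod K)) : i = j := by
  have h1 : ((i:ℕ) : ZMod K).val = i := ZMod.val_cast_of_lt hi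
  have h2 : ((j:ℕ) : ZMod K).val = j := ZMod.val_cast_of_lt hj
  rw [← h1, ← h2, hij]

/-- Single-site update changes the energy by an explicit local quantity. -/
lemma energy_update (K L : ℕ) [NeZero K] [NeZero L] (hK : 2 ≤ K) (hL : 2 ≤ L)
    (h : ℝ) (σ : Cfg K L) (v : Vtx K L) (s : ℕ) :
    energy K L h (Function.update σ v s)
      = energy K L h σ
        - ((chi (s = σ (v.1 + 1, v.2)) - chi (σ v = σ (v.1 + 1, v.2)))
          + (chi (s = σ (v.1, v.2 + 1)) - chi (σ v = σ (v.1, v.2 + 1)))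
          + (chi (σ (v.1 - 1, v.2) = s) - chi (σ (v.1 - 1, v.2) = σ v))
          + (chi (σ (v.1, v.2 - 1) = s) - chi (σ (v.1, v.2 - 1) = σ v)))
        - h * (chi (s = 1) - chi (σ v = 1)) := by
  classical
  set σ' := Function.update σ v s with hσ'
  set v₁ : Vtx K L := (v.1 - 1, v.2) with hv₁
  set v₂ : Vtx K L := (v.1, v.2 - 1) with hv₂
  have hv₁v : v₁ ≠ v := by
    intro hcontra
    exact zmod_sub_one_ne hK v.1 (congrArg Prod.fst hcontra)
  have hv₂v : v₂ ≠ v := by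
    intro hcontra
    exact zmod_sub_one_ne hL v.2 (congrArg Prod.snd hcontra)
  have hv₁v₂ : v₁ ≠ v₂ := by
    intro hcontra
    exact zmod_sub_one_ne hK v.1 (congrArg Prod.fst hcontra)
  -- the "forward neighbours" of v are distinct from v
  have hr : (v.1 + 1, v.2) ≠ v := by
    intro hcontra; exact zmod_add_one_ne hK v.1 (congrArg Prod.fst hcontra)
  have hu : (v.1, v.2 + 1) ≠ v := by
    intro hcontra; exact zmod_add_one_ne hL v.2 (congrArg Prod.snd hcontra)
  have hv₁u : ((v₁.1), v₁.2 + 1) ≠ v := by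
    intro hcontra; exact zmod_sub_one_ne hK v.1 (congrArg Prod.fst hcontra)
  have hv₂r : (v₂.1 + 1, v₂.2) ≠ v := by
    intro hcontra; exact zmod_sub_one_ne hL v.2 (congrArg Prod.snd hcontra)
  have hv₁r : (v₁.1 + 1, v₁.2) = v := by
    simp [hv₁]
  have hv₂u : (v₂.1, v₂.2 + 1) = v := by
    simp [hv₂]
  -- edge part
  set f : Cfg K L → Vtx K L → ℝ := fun τ w =>
    (if τ w = τ (w.1 + 1, w.2) then (1:ℝ) else 0)
      + (if τ w = τ (w.1, w.2 + 1) then (1:ℝ) else 0) with hf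
  set g : Cfg K L → Vtx K L → ℝ := fun τ w => (if τ w = 1 then (1:ℝ) else 0) with hg
  have henergy : ∀ τ, energy K L h τ = -(∑ w : Vtx K L, f τ w) - h * ∑ w, g τ w := by
    intro τ; rfl
  have hfd : ∀ w : Vtx K L, w ∉ ({v, v₁, v₂} : Finset (Vtx K L)) →
      f σ' w - f σ w = 0 := by
    intro w hw
    simp only [Finset.mem_insert, Finset.mem_singleton, not_or] at hw
    obtain ⟨hw1, hw2, hw3⟩ := hw
    have e1 : σ' w = σ w := Function.update_of_ne hw1 _ _
    have e2 : σ' (w.1 + 1, w.2) = σ (w.1 + 1, w.2) := by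
      apply Function.update_of_ne
      intro hcontra
      apply hw2
      obtain ⟨ha', hb'⟩ : w.1 + 1 = v.1 ∧ w.2 = v.2 := Prod.mk.inj hcontra
      have h1 : w.1 = v.1 - 1 := by rw [← ha']; ring
      rw [hv₁]; exact Prod.ext h1 hb'
    have e3 : σ' (w.1, w.2 + 1) = σ (w.1, w.2 + 1) := by
      apply Function.update_of_ne
      intro hcontra
      apply hw3
      obtain ⟨ha', hb'⟩ : w.1 = v.1 ∧ w.2 + 1 = v.2 := Prod.mk.inj hcontra
      have h2 : w.2 = v.2 - 1 := by rw [← hb']; ring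
      rw [hv₂]; exact Prod.ext ha' h2
    simp [hf, e1, e2, e3]
  have hsum1 : (∑ w : Vtx K L, f σ' w) - (∑ w : Vtx K L, f σ w)
      = ∑ w ∈ ({v, v₁, v₂} : Finset (Vtx K L)), (f σ' w - f σ w) := by
    rw [← Finset.sum_sub_distrib]
    exact (Finset.sum_subset (Finset.subset_univ _)
      (fun w _ hw => hfd w hw)).symm
  have hgd : ∀ w : Vtx K L, w ∉ ({v} : Finset (Vtx K L)) → g σ' w - g σ w = 0 := by
    intro w hw
    simp only [Finset.mem_singleton] at hw
    have e1 : σ' w = σ w := Function.update_of_ne hw _ _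
    simp [hg, e1]
  have hsum2 : (∑ w : Vtx K L, g σ' w) - (∑ w : Vtx K L, g σ w)
      = ∑ w ∈ ({v} : Finset (Vtx K L)), (g σ' w - g σ w) := by
    rw [← Finset.sum_sub_distrib]
    exact (Finset.sum_subset (Finset.subset_univ _)
      (fun w _ hw => hgd w hw)).symm
  -- evaluate the local sums
  have hne12 : v ∉ ({v₁, v₂} : Finset (Vtx K L)) := by
    simp [hv₁v.symm ∘ Eq.symm, hv₂v]
    exact ⟨fun hh => hv₁v hh.symm, fun hh => hv₂v hh.symm⟩
  have hval1 : ∑ w ∈ ({v, v₁, v₂} : Finset (Vtx K L)), (f σ' w - f σ w)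
      = ((chi (s = σ (v.1 + 1, v.2)) - chi (σ v = σ (v.1 + 1, v.2)))
          + (chi (s = σ (v.1, v.2 + 1)) - chi (σ v = σ (v.1, v.2 + 1)))
          + (chi (σ v₁ = s) - chi (σ v₁ = σ v))
          + (chi (σ v₂ = s) - chi (σ v₂ = σ v))) := by
    rw [Finset.sum_insert (by simpa using hne12),
        Finset.sum_insert (by simpa using hv₁v₂), Finset.sum_singleton]
    have hfv : f σ' v - f σ v
        = (chi (s = σ (v.1 + 1, v.2)) - chi (σ v = σ (v.1 + 1, v.2)))
          + (chi (s = σ (v.1, v.2 + 1)) - chi (σ v = σ (v.1, v.2 + 1))) := by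
      have e0 : σ' v = s := Function.update_self _ _ _
      have e1 : σ' (v.1 + 1, v.2) = σ (v.1 + 1, v.2) := Function.update_of_ne hr _ _
      have e2 : σ' (v.1, v.2 + 1) = σ (v.1, v.2 + 1) := Function.update_of_ne hu _ _
      simp only [hf, e0, e1, e2, chi]
      ring
    have hfv₁ : f σ' v₁ - f σ v₁ = chi (σ v₁ = s) - chi (σ v₁ = σ v) := by
      have e0 : σ' v₁ = σ v₁ := Function.update_of_ne hv₁v _ _
      have e1 : σ' (v₁.1 + 1, v₁.2) = s := by rw [hv₁r]; exact Function.update_self _ _ _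
      have e1' : σ (v₁.1 + 1, v₁.2) = σ v := by rw [hv₁r]
      have e2 : σ' (v₁.1, v₁.2 + 1) = σ (v₁.1, v₁.2 + 1) := Function.update_of_ne hv₁u _ _
      simp only [hf, e0, e1, e1', e2, chi]
      ring
    have hfv₂ : f σ' v₂ - f σ v₂ = chi (σ v₂ = s) - chi (σ v₂ = σ v) := by
      have e0 : σ' v₂ = σ v₂ := Function.update_of_ne hv₂v _ _
      have e1 : σ' (v₂.1, v₂.2 + 1) = s := by rw [hv₂u]; exact Function.update_self _ _ _
      have e1' : σ (v₂.1, v₂.2 + 1) = σ v := by rw [hv₂u]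
      have e2 : σ' (v₂.1 + 1, v₂.2) = σ (v₂.1 + 1, v₂.2) := Function.update_of_ne hv₂r _ _
      simp only [hf, e0, e1, e1', e2, chi]
      ring
    rw [hfv, hfv₁, hfv₂]; ring
  have hval2 : ∑ w ∈ ({v} : Finset (Vtx K L)), (g σ' w - g σ w)
      = chi (s = 1) - chi (σ v = 1) := by
    rw [Finset.sum_singleton]
    have e0 : σ' v = s := Function.update_self _ _ _
    simp only [hg, e0, chi]
    by_cases h1 : s = 1 <;> by_cases h2 : σ v = 1 <;> simp [h1, h2]
  rw [henergy σ', henergy σ]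
  have h1 : (∑ w : Vtx K L, f σ' w)
      = (∑ w : Vtx K L, f σ w) + ((chi (s = σ (v.1 + 1, v.2)) - chi (σ v = σ (v.1 + 1, v.2)))
          + (chi (s = σ (v.1, v.2 + 1)) - chi (σ v = σ (v.1, v.2 + 1)))
          + (chi (σ v₁ = s) - chi (σ v₁ = σ v))
          + (chi (σ v₂ = s) - chi (σ v₂ = σ v))) := by
    rw [← hval1, ← hsum1]; ring
  have h2 : (∑ w : Vtx K L, g σ' w)
      = (∑ w : Vtx K L, g σ w) + (chi (s = 1) - chi (σ v = 1)) := by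
    rw [← hval2, ← hsum2]; ring
  rw [h1, h2]; ring

set_option linter.unusedVariables false
set_option linter.unusedSectionVars false

open Classical in
/-- The configuration after `t` spins of the `a × b` rectangle of `1`s (in the sea
of `m`s) have been flipped to `m`, flipping columns right-to-left and, within a
column, top-to-bottom. -/
noncomputable def eta (K L : ℕ) (a b m : ℕ) (x : ZMod K) (y : ZMod L) (t : ℕ) :
    Cfg K L :=
  fun v => if ∃ i j : ℕ, i < a ∧ j < b ∧ t ≤ (b - 1 - j) * a + (a - 1 - i) ∧
      v = (x + (i : ZMod K), y + (j : ZMod L)) then 1 else m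

section Eta

variable {K L a b m : ℕ} [NeZero K] [NeZero L] {x : ZMod K} {y : ZMod L}

lemma cell_inj (haK : a < K) (hbL : b < L) {i i' j j' : ℕ}
    (hi : i < a) (hi' : i' < a) (hj : j < b) (hj' : j' < b)
    (hc : ((x + (i : ZMod K), y + (j : ZMod L)) : Vtx K L)
        = (x + (i' : ZMod K), y + (j' : ZMod L))) : i = i' ∧ j = j' := by
  obtain ⟨h1, h2⟩ : x + (i : ZMod K) = x + (i' : ZMod K)
      ∧ y + (j : ZMod L) = y + (j' : ZMod L) := Prod.mk.inj hc
  constructor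
  · exact zmod_cast_inj (lt_trans hi haK) (lt_trans hi' haK) (by exact add_left_cancel h1)
  · exact zmod_cast_inj (lt_trans hj hbL) (lt_trans hj' hbL) (by exact add_left_cancel h2)

lemma rank_lt (ha1 : 1 ≤ a) {i j : ℕ} (hi : i < a) (hj : j < b) :
    (b - 1 - j) * a + (a - 1 - i) < a * b := by
  have h1 : b - 1 - j ≤ b - 1 := Nat.sub_le _ _
  have h2 : a - 1 - i ≤ a - 1 := Nat.sub_le _ _
  calc (b - 1 - j) * a + (a - 1 - i) ≤ (b - 1) * a + (a - 1) := by
        exact Nat.add_le_add (Nat.mul_le_mul_right a h1) h2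
    _ < a * b := by
        have hb1 : 1 ≤ b := by omega
        calc (b - 1) * a + (a - 1) < (b - 1) * a + a := Nat.add_lt_add_left (by omega) _
          _ = b * a := by
              have hble : a ≤ b * a := Nat.le_mul_of_pos_left a (by omega)
              rw [Nat.sub_one_mul]; omega
          _ = a * b := Nat.mul_comm _ _

/-- div/mod decomposition of the rank. -/
lemma rank_div_mod (ha1 : 1 ≤ a) {i j : ℕ} (hi : i < a) (hj : j < b) :
    ((b - 1 - j) * a + (a - 1 - i)) / a = b - 1 - j ∧
    ((b - 1 - j) * a + (a - 1 - i)) % a = a - 1 - i := by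
  have hr : a - 1 - i < a := by omega
  constructor
  · rw [Nat.add_comm, Nat.add_mul_div_right _ _ (by omega : 0 < a), Nat.div_eq_of_lt hr]
    omega
  · rw [Nat.add_comm, Nat.add_mul_mod_self_right, Nat.mod_eq_of_lt hr]

/-- rank is injective: equal ranks force equal cells. -/
lemma rank_inj (ha1 : 1 ≤ a) {i i' j j' : ℕ} (hi : i < a) (hi' : i' < a)
    (hj : j < b) (hj' : j' < b)
    (he : (b - 1 - j) * a + (a - 1 - i) = (b - 1 - j') * a + (a - 1 - i')) :
    i = i' ∧ j = j' := by
  obtain ⟨hd, hm'⟩ := rank_div_mod ha1 hi hj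
  obtain ⟨hd', hm''⟩ := rank_div_mod ha1 hi' hj'
  rw [he] at hd hm'
  omega

/-- At time `rank i j` the cell `(i,j)` still carries spin 1. -/
lemma eta_cell_one (haK : a < K) (hbL : b < L) {i j : ℕ} (hi : i < a) (hj : j < b) :
    eta K L a b m x y ((b - 1 - j) * a + (a - 1 - i))
      ((x + (i : ZMod K), y + (j : ZMod L))) = 1 := by
  rw [eta, if_pos]
  exact ⟨i, j, hi, hj, le_refl _, rfl⟩

/-- At time `rank i j + 1` the cell `(i,j)` carries spin `m`. -/
lemma eta_cell_m (ha1 : 1 ≤ a) (haK : a < K) (hbL : b < L)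
    {i j : ℕ} (hi : i < a) (hj : j < b) :
    eta K L a b m x y ((b - 1 - j) * a + (a - 1 - i) + 1)
      ((x + (i : ZMod K), y + (j : ZMod L))) = m := by
  rw [eta, if_neg]
  rintro ⟨i', j', hi', hj', hrk, hc⟩
  obtain ⟨rfl, rfl⟩ := cell_inj haK hbL hi' hi hj' hj hc.symm
  omega

/-- Away from the flipped cell, the configuration does not change. -/
lemma eta_step_eq (ha1 : 1 ≤ a) (haK : a < K) (hbL : b < L)
    {i j : ℕ} (hi : i < a) (hj : j < b)
    {w : Vtx K L} (hw : w ≠ (x + (i : ZMod K), y + (j : ZMod L))) :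
    eta K L a b m x y ((b - 1 - j) * a + (a - 1 - i)) w
      = eta K L a b m x y ((b - 1 - j) * a + (a - 1 - i) + 1) w := by
  set t := (b - 1 - j) * a + (a - 1 - i) with ht
  rw [eta, eta]
  by_cases hex : ∃ i' j' : ℕ, i' < a ∧ j' < b ∧ t + 1 ≤ (b - 1 - j') * a + (a - 1 - i') ∧
      w = (x + (i' : ZMod K), y + (j' : ZMod L))
  · rw [if_pos, if_pos hex]
    obtain ⟨i', j', hi', hj', hrk, hc⟩ := hex
    exact ⟨i', j', hi', hj', by omega, hc⟩
  · rw [if_neg _, if_neg hex]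
    rintro ⟨i', j', hi', hj', hrk, hc⟩
    apply hex
    refine ⟨i', j', hi', hj', ?_, hc⟩
    rcases Nat.lt_or_ge t ((b - 1 - j') * a + (a - 1 - i')) with hlt | hge
    · omega
    · exfalso
      have heq : (b - 1 - j') * a + (a - 1 - i') = t := le_antisymm hge hrk
      obtain ⟨rfl, rfl⟩ := rank_inj ha1 hi' hi hj' hj (heq.trans ht)
      exact hw hc

/-- The neighbour above (row `i+1`) is already `m`. -/
lemma eta_up_m (ha1 : 1 ≤ a) (haK : a < K) (hbL : b < L)
    {i j : ℕ} (hi : i < a) (hj : j < b) :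
    eta K L a b m x y ((b - 1 - j) * a + (a - 1 - i))
      ((x + ((i+1 : ℕ) : ZMod K), y + (j : ZMod L))) = m := by
  rw [eta, if_neg]
  rintro ⟨i', j', hi', hj', hrk, hc⟩
  obtain ⟨h1, h2⟩ : x + ((i+1 : ℕ) : ZMod K) = x + (i' : ZMod K)
      ∧ y + (j : ZMod L) = y + (j' : ZMod L) := Prod.mk.inj hc
  have hii : i + 1 = i' := zmod_cast_inj (by omega) (lt_trans hi' haK) (add_left_cancel h1)
  have hjj : j = j' := zmod_cast_inj (lt_trans hj hbL) (lt_trans hj' hbL) (add_left_cancel h2)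
  subst hjj
  -- i' = i+1 < a, so rank i' j = rank i j - 1 < rank i j
  have : i + 1 < a := by omega
  omega

/-- The neighbour to the right (column `j+1`) is already `m`. -/
lemma eta_right_m (ha1 : 1 ≤ a) (haK : a < K) (hbL : b < L)
    {i j : ℕ} (hi : i < a) (hj : j < b) :
    eta K L a b m x y ((b - 1 - j) * a + (a - 1 - i))
      ((x + (i : ZMod K), y + ((j+1 : ℕ) : ZMod L))) = m := by
  rw [eta, if_neg]
  rintro ⟨i', j', hi', hj', hrk, hc⟩
  obtain ⟨h1, h2⟩ : x + (i : ZMod K) = x + (i' : ZMod K)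
      ∧ y + ((j+1 : ℕ) : ZMod L) = y + (j' : ZMod L) := Prod.mk.inj hc
  have hii : i = i' := zmod_cast_inj (lt_trans hi haK) (lt_trans hi' haK) (add_left_cancel h1)
  have hjj : j + 1 = j' := zmod_cast_inj (by omega) (lt_trans hj' hbL) (add_left_cancel h2)
  subst hii
  have hj1 : j + 1 < b := by omega
  -- rank i (j+1) = rank i j - a
  have hba : (b - 1 - j') * a + a = (b - 1 - j) * a := by
    have hx : b - 1 - j' + 1 = b - 1 - j := by omega
    rw [← hx]; ring
  omega

/-- Below (row `i-1`, `i ≥ 1`): still spin 1. -/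
lemma eta_down_one (haK : a < K) (hbL : b < L)
    {i j : ℕ} (hi : i < a) (hj : j < b) (hi1 : 1 ≤ i) :
    eta K L a b m x y ((b - 1 - j) * a + (a - 1 - i))
      ((x + ((i-1 : ℕ) : ZMod K), y + (j : ZMod L))) = 1 := by
  rw [eta, if_pos]
  exact ⟨i - 1, j, by omega, hj, by omega, rfl⟩

/-- Left (column `j-1`, `j ≥ 1`): still spin 1. -/
lemma eta_left_one (ha1 : 1 ≤ a) (haK : a < K) (hbL : b < L)
    {i j : ℕ} (hi : i < a) (hj : j < b) (hj1 : 1 ≤ j) :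
    eta K L a b m x y ((b - 1 - j) * a + (a - 1 - i))
      ((x + (i : ZMod K), y + ((j-1 : ℕ) : ZMod L))) = 1 := by
  rw [eta, if_pos]
  refine ⟨i, j - 1, hi, by omega, ?_, rfl⟩
  have : (b - 1 - j) * a + a = (b - 1 - (j-1)) * a := by
    have hh : b - 1 - j + 1 = b - 1 - (j - 1) := by omega
    rw [← hh]; ring
  omega

/-- Below row `0` (i.e. row `x - 1`): spin `m`. -/
lemma eta_bottom_m (haK : a < K) (hbL : b < L) {j : ℕ} (hj : j < b) (t : ℕ) :
    eta K L a b m x y t ((x + ((K-1 : ℕ) : ZMod K), y + (j : ZMod L))) = m := by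
  rw [eta, if_neg]
  rintro ⟨i', j', hi', hj', hrk, hc⟩
  obtain ⟨h1, _⟩ : x + ((K-1 : ℕ) : ZMod K) = x + (i' : ZMod K)
      ∧ y + (j : ZMod L) = y + (j' : ZMod L) := Prod.mk.inj hc
  have hii : K - 1 = i' := zmod_cast_inj (by omega) (lt_trans hi' haK) (add_left_cancel h1)
  omega

/-- Left of column `0` (i.e. column `y - 1`): spin `m`. -/
lemma eta_leftedge_m (haK : a < K) (hbL : b < L) {i : ℕ} (hi : i < a) (t : ℕ) :
    eta K L a b m x y t ((x + (i : ZMod K), y + ((L-1 : ℕ) : ZMod L))) = m := by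
  rw [eta, if_neg]
  rintro ⟨i', j', hi', hj', hrk, hc⟩
  obtain ⟨_, h2⟩ : x + (i : ZMod K) = x + (i' : ZMod K)
      ∧ y + ((L-1 : ℕ) : ZMod L) = y + (j' : ZMod L) := Prod.mk.inj hc
  have hjj : L - 1 = j' := zmod_cast_inj (by omega) (lt_trans hj' hbL) (add_left_cancel h2)
  omega

/-- values of eta are 1 or m -/
lemma eta_val (t : ℕ) (w : Vtx K L) :
    eta K L a b m x y t w = 1 ∨ eta K L a b m x y t w = m := by
  rw [eta]; split <;> simp

/-- time 0: the rectangle -/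
lemma eta_zero_mem (hw : w ∈ rect K L x y a b) : eta K L a b m x y 0 w = 1 := by
  obtain ⟨i, j, hi, hj, rfl⟩ := hw
  rw [eta, if_pos]
  exact ⟨i, j, hi, hj, Nat.zero_le _, rfl⟩

lemma eta_zero_not_mem {w : Vtx K L} (hw : w ∉ rect K L x y a b) :
    eta K L a b m x y 0 w = m := by
  rw [eta, if_neg]
  rintro ⟨i, j, hi, hj, _, hc⟩
  exact hw ⟨i, j, hi, hj, hc⟩

lemma eta_final (ha1 : 1 ≤ a) : eta K L a b m x y (a * b) = const K L m := by
  funext w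
  rw [eta, if_neg, const]
  rintro ⟨i, j, hi, hj, hrk, _⟩
  exact absurd hrk (not_le.mpr (rank_lt ha1 hi hj))

end Eta

lemma pfst {α β : Type*} (a : α) (b : β) : (a, b).1 = a := rfl
lemma psnd {α β : Type*} (a : α) (b : β) : (a, b).2 = b := rfl

section Step

variable {K L a b m : ℕ} [NeZero K] [NeZero L] {x : ZMod K} {y : ZMod L} {h : ℝ}

lemma eta_succ_eq_update (ha1 : 1 ≤ a) (haK : a < K) (hbL : b < L)
    {i j : ℕ} (hi : i < a) (hj : j < b) :
    eta K L a b m x y ((b - 1 - j) * a + (a - 1 - i) + 1)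
      = Function.update (eta K L a b m x y ((b - 1 - j) * a + (a - 1 - i)))
          ((x + (i : ZMod K), y + (j : ZMod L))) m := by
  funext w
  by_cases hw : w = ((x + (i : ZMod K), y + (j : ZMod L)) : Vtx K L)
  · subst hw
    rw [Function.update_self]
    exact eta_cell_m ha1 haK hbL hi hj
  · rw [Function.update_of_ne hw]
    exact (eta_step_eq ha1 haK hbL hi hj hw).symm

lemma energy_eta_step (ha1 : 1 ≤ a) (hb1 : 1 ≤ b) (haK : a < K) (hbL : b < L)
    (hm : m ≠ 1) {i j : ℕ} (hi : i < a) (hj : j < b) :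
    energy K L h (eta K L a b m x y ((b - 1 - j) * a + (a - 1 - i) + 1))
      = energy K L h (eta K L a b m x y ((b - 1 - j) * a + (a - 1 - i)))
        + (h - (2 + (if i = 0 then (1:ℝ) else -1) + (if j = 0 then (1:ℝ) else -1))) := by
  have hK : 2 ≤ K := by omega
  have hL : 2 ≤ L := by omega
  set σ := eta K L a b m x y ((b - 1 - j) * a + (a - 1 - i)) with hσ
  have hstep : eta K L a b m x y ((b - 1 - j) * a + (a - 1 - i) + 1)
      = Function.update σ ((x + (i : ZMod K), y + (j : ZMod L))) m :=
    eta_succ_eq_update ha1 haK hbL hi hj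
  rw [hstep, energy_update K L hK hL h σ ((x + (i : ZMod K), y + (j : ZMod L))) m]
  simp only [pfst, psnd]
  have hm1 : ¬ ((1:ℕ) = m) := fun hh => hm hh.symm
  have hcv : σ (x + (i : ZMod K), y + (j : ZMod L)) = 1 := eta_cell_one haK hbL hi hj
  have hr : σ (x + (i : ZMod K) + 1, y + (j : ZMod L)) = m := by
    have hco : ((x + (i : ZMod K) + 1, y + (j : ZMod L)) : Vtx K L)
        = (x + ((i+1 : ℕ) : ZMod K), y + (j : ZMod L)) :=
      Prod.ext (by push_cast; ring) rfl
    rw [hco]; exact eta_up_m ha1 haK hbL hi hj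
  have hu : σ (x + (i : ZMod K), y + (j : ZMod L) + 1) = m := by
    have hco : ((x + (i : ZMod K), y + (j : ZMod L) + 1) : Vtx K L)
        = (x + (i : ZMod K), y + ((j+1 : ℕ) : ZMod L)) :=
      Prod.ext rfl (by push_cast; ring)
    rw [hco]; exact eta_right_m ha1 haK hbL hi hj
  have hd : σ (x + (i : ZMod K) - 1, y + (j : ZMod L)) = (if i = 0 then m else 1) := by
    rcases Nat.eq_zero_or_pos i with hi0 | hi1
    · have hco : ((x + (i : ZMod K) - 1, y + (j : ZMod L)) : Vtx K L)
          = (x + ((K-1 : ℕ) : ZMod K), y + (j : ZMod L)) := by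
        refine Prod.ext ?_ rfl
        show x + (i : ZMod K) - 1 = x + ((K-1 : ℕ) : ZMod K)
        have hKm : ((K-1 : ℕ) : ZMod K) = -1 := by
          have hKc : ((K : ℕ) : ZMod K) = 0 := ZMod.natCast_self K
          push_cast [Nat.cast_sub (by omega : 1 ≤ K)]
          rw [hKc]; ring
        rw [hKm, hi0]; push_cast; ring
      rw [hco, if_pos hi0]; exact eta_bottom_m haK hbL hj _
    · have hco : ((x + (i : ZMod K) - 1, y + (j : ZMod L)) : Vtx K L)
          = (x + ((i-1 : ℕ) : ZMod K), y + (j : ZMod L)) := by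
        refine Prod.ext ?_ rfl
        show x + (i : ZMod K) - 1 = x + ((i-1 : ℕ) : ZMod K)
        push_cast [Nat.cast_sub hi1]; ring
      rw [hco, if_neg (by omega)]
      exact eta_down_one haK hbL hi hj hi1
  have hl : σ (x + (i : ZMod K), y + (j : ZMod L) - 1) = (if j = 0 then m else 1) := by
    rcases Nat.eq_zero_or_pos j with hj0 | hj1
    · have hco : ((x + (i : ZMod K), y + (j : ZMod L) - 1) : Vtx K L)
          = (x + (i : ZMod K), y + ((L-1 : ℕ) : ZMod L)) := by
        refine Prod.ext rfl ?_
        show y + (j : ZMod L) - 1 = y + ((L-1 : ℕ) : ZMod L)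
        have hLm : ((L-1 : ℕ) : ZMod L) = -1 := by
          have hLc : ((L : ℕ) : ZMod L) = 0 := ZMod.natCast_self L
          push_cast [Nat.cast_sub (by omega : 1 ≤ L)]
          rw [hLc]; ring
        rw [hLm, hj0]; push_cast; ring
      rw [hco, if_pos hj0]; exact eta_leftedge_m haK hbL hi _
    · have hco : ((x + (i : ZMod K), y + (j : ZMod L) - 1) : Vtx K L)
          = (x + (i : ZMod K), y + ((j-1 : ℕ) : ZMod L)) := by
        refine Prod.ext rfl ?_
        show y + (j : ZMod L) - 1 = y + ((j-1 : ℕ) : ZMod L)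
        push_cast [Nat.cast_sub hj1]; ring
      rw [hco, if_neg (by omega)]
      exact eta_left_one ha1 haK hbL hi hj hj1
  rw [hcv, hr, hu, hd, hl]
  have c1 : chi (m = m) = 1 := chi_true rfl
  have c2 : chi ((1:ℕ) = m) = 0 := chi_false hm1
  have c3 : chi (m = 1) = 0 := chi_false hm
  have c4 : chi ((1:ℕ) = 1) = 1 := chi_true rfl
  have c0 : chi True = 1 := chi_true trivial
  by_cases hi0 : i = 0
  · by_cases hj0 : j = 0
    · simp only [if_pos hi0, if_pos hj0, c1, c2, c3, c4, c0]; ring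
    · simp only [if_pos hi0, if_neg hj0, c1, c2, c3, c4, c0]; ring
  · by_cases hj0 : j = 0
    · simp only [if_neg hi0, if_pos hj0, c1, c2, c3, c4, c0]; ring
    · simp only [if_neg hi0, if_neg hj0, c1, c2, c3, c4, c0]; ring

end Step

section Induct

variable {K L a b m : ℕ} [NeZero K] [NeZero L] {x : ZMod K} {y : ZMod L} {h : ℝ}

/-- each time `t < a*b` is the rank of a unique cell -/
lemma exists_rank (ha1 : 1 ≤ a) {t : ℕ} (ht : t < a * b) :
    ∃ i j : ℕ, i < a ∧ j < b ∧ (b - 1 - j) * a + (a - 1 - i) = t ∧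
      (i = 0 ↔ t % a = a - 1) ∧ (j = 0 ↔ t / a = b - 1) := by
  obtain ⟨p, hp⟩ : ∃ p, t % a = p := ⟨_, rfl⟩
  obtain ⟨c, hc⟩ : ∃ c, t / a = c := ⟨_, rfl⟩
  have hpa : p < a := hp ▸ Nat.mod_lt _ (by omega)
  have hdm : a * c + p = t := by rw [← hp, ← hc]; exact Nat.div_add_mod t a
  have hcb : c < b := by
    by_contra hcon
    push_neg at hcon
    have : a * b ≤ a * c := Nat.mul_le_mul_left a hcon
    omega
  refine ⟨a - 1 - p, b - 1 - c, by omega, by omega, ?_, ?_, ?_⟩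
  · have e1 : b - 1 - (b - 1 - c) = c := by omega
    have e2 : a - 1 - (a - 1 - p) = p := by omega
    rw [e1, e2, Nat.mul_comm]
    omega
  · rw [hp]; omega
  · rw [hc]; omega

/-- the one-step energy change, phrased in terms of `t` -/
lemma energy_eta_succ (ha1 : 1 ≤ a) (hb1 : 1 ≤ b) (haK : a < K) (hbL : b < L)
    (hm : m ≠ 1) {t : ℕ} (ht : t < a * b) :
    energy K L h (eta K L a b m x y (t + 1))
      = energy K L h (eta K L a b m x y t)
        + (h - (2 + (if t % a = a - 1 then (1:ℝ) else -1)
            + (if t / a = b - 1 then (1:ℝ) else -1))) := by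
  obtain ⟨i, j, hi, hj, hrk, hiff1, hiff2⟩ := exists_rank ha1 ht
  have hst := energy_eta_step (x := x) (y := y) (h := h) ha1 hb1 haK hbL hm hi hj
  rw [hrk] at hst
  have g1 : (if i = 0 then (1:ℝ) else -1) = (if t % a = a - 1 then (1:ℝ) else -1) := by
    by_cases h1 : i = 0
    · rw [if_pos h1, if_pos (hiff1.mp h1)]
    · rw [if_neg h1, if_neg (fun hh => h1 (hiff1.mpr hh))]
  have g2 : (if j = 0 then (1:ℝ) else -1) = (if t / a = b - 1 then (1:ℝ) else -1) := by
    by_cases h2 : j = 0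
    · rw [if_pos h2, if_pos (hiff2.mp h2)]
    · rw [if_neg h2, if_neg (fun hh => h2 (hiff2.mpr hh))]
  rw [hst, g1, g2]

/-- running energy formula before the path is finished -/
lemma energy_eta_formula (ha1 : 1 ≤ a) (hb1 : 1 ≤ b) (haK : a < K) (hbL : b < L)
    (hm : m ≠ 1) :
    ∀ t, t < a * b →
      energy K L h (eta K L a b m x y t)
        = energy K L h (eta K L a b m x y 0)
          + (((t / a : ℕ) : ℝ) * ((a : ℝ) * h - 2) + ((t % a : ℕ) : ℝ) * h
              - (if t / a = b - 1 then 2 * ((t % a : ℕ) : ℝ) else 0)) := by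
  intro t
  induction t with
  | zero =>
      intro _
      simp
  | succ t ih =>
      intro ht1
      have ht : t < a * b := by omega
      rw [energy_eta_succ ha1 hb1 haK hbL hm ht, ih ht]
      obtain ⟨p, hp⟩ : ∃ p, t % a = p := ⟨_, rfl⟩
      obtain ⟨c, hc⟩ : ∃ c, t / a = c := ⟨_, rfl⟩
      have hpa : p < a := hp ▸ Nat.mod_lt _ (by omega)
      have hdm : a * c + p = t := by rw [← hp, ← hc]; exact Nat.div_add_mod t a
      by_cases hlast : p = a - 1
      · -- column boundary
        have e1 : t + 1 = (c + 1) * a := by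
          have e0 : (c + 1) * a = a * c + a := by ring
          omega
        have e2 : (t + 1) / a = c + 1 := by
          rw [e1]; exact Nat.mul_div_cancel _ (by omega)
        have e3 : (t + 1) % a = 0 := by
          rw [e1]; exact Nat.mul_mod_left _ _
        have e4 : c + 1 < b := by
          by_contra hcon
          push_neg at hcon
          have hge : b * a ≤ (c + 1) * a := Nat.mul_le_mul_right a hcon
          have hba : b * a = a * b := Nat.mul_comm _ _
          omega
        have e5 : ¬ (c = b - 1) := by omega
        rw [hp, hc, e2, e3]
        simp only [if_pos hlast, if_neg e5]
        by_cases e6 : c + 1 = b - 1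
        · simp only [if_pos e6]
          push_cast [hlast, Nat.cast_sub ha1]
          ring
        · simp only [if_neg e6]
          push_cast [hlast, Nat.cast_sub ha1]
          ring
      · -- inside a column
        have hpa1 : p + 1 < a := by omega
        have e1 : t + 1 = (p + 1) + c * a := by
          have e0 : c * a = a * c := Nat.mul_comm _ _
          omega
        have e2 : (t + 1) / a = c := by
          rw [e1, Nat.add_mul_div_right _ _ (by omega : 0 < a),
            Nat.div_eq_of_lt hpa1]
          omega
        have e3 : (t + 1) % a = p + 1 := by
          rw [e1, Nat.add_mul_mod_self_right]
          exact Nat.mod_eq_of_lt hpa1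
        rw [hp, hc, e2, e3]
        simp only [if_neg hlast]
        by_cases e6 : c = b - 1
        · simp only [if_pos e6]
          push_cast
          ring
        · simp only [if_neg e6]
          push_cast
          ring

/-- total energy change over the whole path -/
lemma energy_eta_total (ha1 : 1 ≤ a) (hb1 : 1 ≤ b) (haK : a < K) (hbL : b < L)
    (hm : m ≠ 1) :
    energy K L h (eta K L a b m x y (a * b))
      = energy K L h (eta K L a b m x y 0)
        + ((a : ℝ) * (b : ℝ) * h - 2 * (a : ℝ) - 2 * (b : ℝ)) := by
  have hab1 : 1 ≤ a * b := by
    have := Nat.mul_le_mul ha1 hb1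
    omega
  have he0 : (b - 1) * a + a = b * a := by
    have hle : a ≤ b * a := Nat.le_mul_of_pos_left a (by omega)
    rw [Nat.sub_one_mul]
    omega
  have hba : b * a = a * b := Nat.mul_comm _ _
  have hrk : (b - 1 - 0) * a + (a - 1 - 0) = a * b - 1 := by
    simp only [Nat.sub_zero]
    omega
  have htm : a * b - 1 < a * b := by omega
  have hdm : (a * b - 1) / a = b - 1 ∧ (a * b - 1) % a = a - 1 := by
    have hh := rank_div_mod (b := b) ha1 (by omega : 0 < a) (by omega : 0 < b)
    rw [hrk] at hh
    simpa using hh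
  have hstep := energy_eta_step (x := x) (y := y) (h := h) ha1 hb1 haK hbL hm
    (by omega : 0 < a) (by omega : 0 < b)
  rw [hrk] at hstep
  have hab' : a * b - 1 + 1 = a * b := by omega
  rw [hab'] at hstep
  simp only [if_pos rfl] at hstep
  rw [hstep, energy_eta_formula ha1 hb1 haK hbL hm _ htm, hdm.1, hdm.2]
  rw [if_pos (rfl : b - 1 = b - 1)]
  push_cast [Nat.cast_sub ha1, Nat.cast_sub hb1]
  ring

/-- uniform energy bound along the path -/
lemma energy_eta_bound (ha1 : 1 ≤ a) (hb1 : 1 ≤ b) (haK : a < K) (hbL : b < L)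
    (hm : m ≠ 1) (h0 : 0 < h) (hha : h * (a : ℝ) < 2) :
    ∀ t, t ≤ a * b →
      energy K L h (eta K L a b m x y t)
        ≤ energy K L h (eta K L a b m x y 0) + ((a : ℝ) - 1) * h := by
  intro t ht
  have ha0 : (1:ℝ) ≤ (a : ℝ) := by exact_mod_cast ha1
  have hb0 : (1:ℝ) ≤ (b : ℝ) := by exact_mod_cast hb1
  rcases Nat.lt_or_ge t (a * b) with htl | hte
  · rw [energy_eta_formula ha1 hb1 haK hbL hm t htl]
    have f1 : ((t / a : ℕ) : ℝ) * ((a : ℝ) * h - 2) ≤ 0 := by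
      apply mul_nonpos_of_nonneg_of_nonpos (by positivity)
      nlinarith
    have f2 : ((t % a : ℕ) : ℝ) ≤ (a : ℝ) - 1 := by
      have hlt : t % a ≤ a - 1 := Nat.le_pred_of_lt (Nat.mod_lt _ (by omega))
      have hc : ((t % a : ℕ) : ℝ) ≤ ((a - 1 : ℕ) : ℝ) := Nat.cast_le.mpr hlt
      rwa [Nat.cast_sub ha1, Nat.cast_one] at hc
    have f3 : (0:ℝ) ≤ (if t / a = b - 1 then 2 * ((t % a : ℕ) : ℝ) else 0) := by
      split
      · positivity
      · exact le_rfl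
    linarith [f1, f3, mul_le_mul_of_nonneg_right f2 (le_of_lt h0)]
  · have hte' : t = a * b := by omega
    rw [hte', energy_eta_total ha1 hb1 haK hbL hm]
    have g1 : h * (a:ℝ) * (b:ℝ) ≤ 2 * (b:ℝ) :=
      mul_le_mul_of_nonneg_right (le_of_lt hha) (by positivity)
    have g2 : (0:ℝ) ≤ ((a:ℝ) - 1) * h := mul_nonneg (by linarith) (le_of_lt h0)
    nlinarith [g1, g2]

end Induct

/-- MAIN: shrinking an `a × b` rectangle of 1s column by column. -/
lemma main_path (q K L a b m : ℕ) [NeZero K] [NeZero L] (h : ℝ)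
    (x : ZMod K) (y : ZMod L)
    (ha1 : 1 ≤ a) (hb1 : 1 ≤ b) (haK : a < K) (hbL : b < L)
    (hm2 : 2 ≤ m) (hmq : m ≤ q) (h0 : 0 < h) (hha : h * (a:ℝ) < 2)
    (σ : Cfg K L)
    (hσ1 : ∀ v ∈ rect K L x y a b, σ v = 1)
    (hσm : ∀ v ∉ rect K L x y a b, σ v = m) :
    ∃ ω, IsPath q K L σ (const K L m) ω ∧
      (∀ ξ ∈ ω, energy K L h ξ ≤ energy K L h (const K L m)
        + (2*(a:ℝ) + 2*(b:ℝ) - (a:ℝ)*(b:ℝ)*h) + ((a:ℝ) - 1) * h) := by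
  have hm : m ≠ 1 := by omega
  have hσ0 : σ = eta K L a b m x y 0 := by
    funext w
    by_cases hw : w ∈ rect K L x y a b
    · rw [hσ1 w hw, eta_zero_mem hw]
    · rw [hσm w hw, eta_zero_not_mem hw]
  have htotal := energy_eta_total (K := K) (L := L) (m := m) (x := x) (y := y)
    (h := h) ha1 hb1 haK hbL hm
  rw [eta_final (m := m) (x := x) (y := y) ha1] at htotal
  refine ⟨(List.range (a*b+1)).map (eta K L a b m x y), ⟨?_, ?_, ?_, ?_⟩, ?_⟩
  · rw [List.head?_map, List.range_succ_eq_map, List.head?_cons, hσ0]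
    rfl
  · rw [List.getLast?_map, List.range_succ, List.getLast?_concat, Option.map_some,
      eta_final (m := m) (x := x) (y := y) ha1]
  · unfold List.Chain'; rw [List.isChain_map]
    refine (List.isChain_range_succ _ _).mpr ?_
    intro t htl
    obtain ⟨i, j, hi, hj, hrk, _, _⟩ := exists_rank ha1 htl
    refine ⟨(x + (i:ZMod K), y + (j:ZMod L)), ?_, ?_⟩
    · rw [← hrk, eta_cell_one haK hbL hi hj, eta_cell_m ha1 haK hbL hi hj]
      omega
    · intro w hw
      rw [← hrk]
      exact eta_step_eq ha1 haK hbL hi hj hw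
  · intro ξ hξ
    obtain ⟨t, _, rfl⟩ := List.mem_map.mp hξ
    intro v
    rcases eta_val (a := a) (b := b) (m := m) (x := x) (y := y) t v with hv | hv <;>
      rw [hv] <;> omega
  · intro ξ hξ
    obtain ⟨t, htmem, rfl⟩ := List.mem_map.mp hξ
    have htle : t ≤ a * b := by
      have := List.mem_range.mp htmem; omega
    have hb' := energy_eta_bound (x := x) (y := y) ha1 hb1 haK hbL hm h0 hha t htle
    linarith [hb', htotal]

/-- transpose of a configuration -/
def trC (K L : ℕ) (σ : Cfg K L) : Cfg L K := fun v => σ (v.2, v.1)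

lemma trC_trC (K L : ℕ) (σ : Cfg K L) : trC L K (trC K L σ) = σ := rfl

lemma trC_const (K L s : ℕ) : trC K L (const K L s) = const L K s := rfl

lemma energy_trC (K L : ℕ) [NeZero K] [NeZero L] (h : ℝ) (σ : Cfg K L) :
    energy L K h (trC K L σ) = energy K L h σ := by
  unfold energy trC
  congr 1
  · congr 1
    refine Fintype.sum_equiv (Equiv.prodComm (ZMod L) (ZMod K)) _ _ ?_
    intro v
    simp only [Equiv.prodComm_apply, Prod.swap, pfst, psnd]
    exact add_comm _ _
  · congr 1
    refine Fintype.sum_equiv (Equiv.prodComm (ZMod L) (ZMod K)) _ _ ?_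
    intro v
    simp only [Equiv.prodComm_apply, Prod.swap, pfst, psnd]
    rfl

lemma communicates_trC {K L : ℕ} {σ σ' : Cfg K L}
    (hc : Communicates K L σ σ') : Communicates L K (trC K L σ) (trC K L σ') := by
  obtain ⟨v, hne, heq⟩ := hc
  refine ⟨(v.2, v.1), ?_, ?_⟩
  · exact hne
  · intro w hw
    apply heq
    intro hcon
    apply hw
    rw [← hcon]

/-- from any `σ ∈ R̄_{ℓ*−1,ℓ*}(m,1)` there is a path to `𝐦` whose
maximal energy is `< 4ℓ* − h(ℓ*(ℓ*−1)+1) + H(𝐦)`. -/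
theorem path_from_quasisquare_to_m (q K L : ℕ) [NeZero K] [NeZero L] (h : ℝ)
    (hq : 2 < q) (hh0 : 0 < h) (hh1 : h < 1)
    (hhint : ¬ ∃ n : ℤ, (2 : ℝ) / h = (n : ℝ))
    (hK : 3 * ellStar h ≤ K) (hKL : K ≤ L) :
    ∀ m, 2 ≤ m → m ≤ q →
      ∀ σ ∈ Rbar K L (ellStar h - 1) (ellStar h) m 1,
        ∃ ω, IsPath q K L σ (const K L m) ω ∧
          height K L h ω < Gamma h + energy K L h (const K L m) := by
  intro m hm2 hmq σ hσ
  have h2h : (2:ℝ) < 2 / h := by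
    rw [lt_div_iff₀ hh0]; nlinarith
  have hl2 : 2 < ellStar h := by
    rw [ellStar]; exact Nat.lt_ceil.mpr (by exact_mod_cast h2h)
  set l := ellStar h with hldef
  have hceil : (2:ℝ)/h ≤ (l:ℝ) := Nat.le_ceil _
  have hnel : (2:ℝ)/h ≠ (l:ℝ) := by
    intro hcon; exact hhint ⟨(l:ℤ), by rw [hcon]; push_cast; ring⟩
  have hstrict : (2:ℝ)/h < (l:ℝ) := lt_of_le_of_ne hceil hnel
  have hlow : (l:ℝ) < 2/h + 1 := by
    have hcl := Nat.ceil_lt_add_one (le_of_lt (by positivity : (0:ℝ) < 2/h))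
    exact_mod_cast hcl
  have hkey : h * ((l:ℝ) - 1) < 2 := by
    have h1 : (l:ℝ) - 1 < 2/h := by linarith
    rw [lt_div_iff₀ hh0] at h1; linarith
  have hgt : (2:ℝ) < h * (l:ℝ) := by
    rw [div_lt_iff₀ hh0] at hstrict; linarith
  set a := l - 1 with hadef
  have ha1 : 1 ≤ a := by omega
  have hb1 : 1 ≤ l := by omega
  have haK : a < K := by omega
  have hbK : l < K := by omega
  have haL : a < L := by omega
  have hbL : l < L := by omega
  have hacast : ((a:ℕ):ℝ) = (l:ℝ) - 1 := by
    rw [hadef]; push_cast [Nat.cast_sub (by omega : 1 ≤ l)]; ring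
  have hha : h * ((a:ℕ):ℝ) < 2 := by rw [hacast]; exact hkey
  have hnum : (2*((a:ℕ):ℝ) + 2*((l:ℕ):ℝ) - ((a:ℕ):ℝ)*((l:ℕ):ℝ)*h)
      + (((a:ℕ):ℝ) - 1)*h < Gamma h := by
    rw [Gamma, ← hldef, hacast]
    nlinarith [hkey]
  obtain ⟨A, hA, hA1, hAm⟩ := hσ
  obtain ⟨x, y, hcase⟩ := hA
  have key : ∃ ω, IsPath q K L σ (const K L m) ω ∧
      ∀ ξ ∈ ω, energy K L h ξ ≤ energy K L h (const K L m)
        + ((2*((a:ℕ):ℝ) + 2*((l:ℕ):ℝ) - ((a:ℕ):ℝ)*((l:ℕ):ℝ)*h)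
            + (((a:ℕ):ℝ) - 1)*h) := by
    rcases hcase with hAr | hAr
    · subst hAr
      obtain ⟨ω, hpath, hbound⟩ := main_path q K L a l m h x y ha1 hb1 haK hbL
        hm2 hmq hh0 hha σ (fun v hv => hA1 v hv) (fun v hv => hAm v hv)
      exact ⟨ω, hpath, fun ξ hξ => by linarith [hbound ξ hξ]⟩
    · have hσ1' : ∀ v ∈ rect L K y x a l, trC K L σ v = 1 := by
        rintro v ⟨i, j, hi, hj, rfl⟩
        apply hA1
        rw [hAr]
        exact ⟨j, i, hj, hi, rfl⟩
      have hσm' : ∀ v ∉ rect L K y x a l, trC K L σ v = m := by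
        intro v hv
        apply hAm
        rw [hAr]
        rintro ⟨i', j', hi', hj', hc⟩
        apply hv
        refine ⟨j', i', hj', hi', ?_⟩
        obtain ⟨h1', h2'⟩ : v.2 = x + (i' : ZMod K) ∧ v.1 = y + (j' : ZMod L) :=
          Prod.mk.inj hc
        exact Prod.ext h2' h1'
      obtain ⟨ω', hpath', hbound'⟩ := main_path q L K a l m h y x ha1 hb1 haL hbK
        hm2 hmq hh0 hha (trC K L σ) hσ1' hσm'
      refine ⟨ω'.map (trC L K), ⟨?_, ?_, ?_, ?_⟩, ?_⟩
      · rw [List.head?_map, hpath'.1, Option.map_some, trC_trC]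
      · rw [List.getLast?_map, hpath'.2.1, Option.map_some, trC_const]
      · unfold List.Chain'; rw [List.isChain_map]
        exact List.IsChain.imp (fun η₁ η₂ hc => communicates_trC hc) hpath'.2.2.1
      · intro ξ hξ
        obtain ⟨ηo, hηo, rfl⟩ := List.mem_map.mp hξ
        intro v
        exact hpath'.2.2.2 ηo hηo (v.2, v.1)
      · intro ξ hξ
        obtain ⟨ηo, hηo, rfl⟩ := List.mem_map.mp hξ
        rw [energy_trC]
        have hbb := hbound' ηo hηo
        rw [← trC_const K L m, energy_trC K L h (const K L m)] at hbb
        linarith [hbb]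
  obtain ⟨ω, hpath, hbound⟩ := key
  refine ⟨ω, hpath, ?_⟩
  rw [height]
  have hmem : σ ∈ ω := List.mem_of_mem_head? (by rw [hpath.1]; rfl)
  have hne2 : (energy K L h '' {η | η ∈ ω}).Nonempty :=
    ⟨energy K L h σ, σ, hmem, rfl⟩
  have hub := csSup_le hne2 (fun z hz => by
    obtain ⟨ξ, hξ, rfl⟩ := hz
    exact hbound ξ hξ)
  calc sSup (energy K L h '' {η | η ∈ ω})
      ≤ energy K L h (const K L m)
        + ((2*((a:ℕ):ℝ) + 2*((l:ℕ):ℝ) - ((a:ℕ):ℝ)*((l:ℕ):ℝ)*h)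
            + (((a:ℕ):ℝ) - 1)*h) := hub
    _ < Gamma h + energy K L h (const K L m) := by linarith [hnum]
end PottsPos
end
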